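/- Let 𝒜 and ℬ be reduced gST-automata and let 𝒜*ℬ be the gST-automaton with states Q_𝒜 ⊔ Q_ℬ, transitions E_𝒜 ⊔ E_ℬ together with a transition from p to q labelled id_{μ_𝒜(p)} for every accepting state p of 𝒜 and initial state q of ℬ with μ_𝒜(p) ≅ μ_ℬ(q), initial states ⊥_𝒜 and accepting states ⊤_ℬ. Then L(𝒜*ℬ) = L(𝒜)·L(ℬ). -/

import Mathlib

open scoped Classical

namespace HDA

/-! ### Ipomsets over a fixed alphabet -/

structure PreIpomset (σ : Type) : Type 1 where
  carrier : Type
  fin : Finite carrier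
  lt : carrier → carrier → Prop
  evord : carrier → carrier → Prop
  S : Set carrier
  T : Set carrier
  lab : carrier → σ

namespace PreIpomset

variable {σ : Type}

/-- The precedence order is empty. -/
def Discrete (P : PreIpomset σ) : Prop := ∀ x y, ¬ P.lt x y

/-- Validity: `lt` is a strict partial order which is an interval order, `evord` is acyclic,
for distinct events exactly one of the four relations holds, sources are minimal and
targets are maximal.  (All ipomsets considered are interval.) -/
structure IsIpomset (P : PreIpomset σ) : Prop where
  lt_trans : ∀ x y z, P.lt x y → P.lt y z → P.lt x z
  lt_irrefl : ∀ x, ¬ P.lt x x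
  evord_acyclic : ∀ x, ¬ Relation.TransGen P.evord x x
  total : ∀ x y : P.carrier, x ≠ y → P.lt x y ∨ P.lt y x ∨ P.evord x y ∨ P.evord y x
  lt_not_evord : ∀ x y, P.lt x y → ¬ P.evord x y ∧ ¬ P.evord y x
  src_min : ∀ x ∈ P.S, ∀ y, ¬ P.lt y x
  tgt_max : ∀ x ∈ P.T, ∀ y, ¬ P.lt x y
  interval : ∀ w x y z, P.lt w x → P.lt y z → P.lt w z ∨ P.lt y x

/-- A conclist: a discrete ipomset with empty interfaces. -/
def IsConclist (P : PreIpomset σ) : Prop :=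
  P.IsIpomset ∧ P.Discrete ∧ P.S = ∅ ∧ P.T = ∅

/-- A starter `⟨U∖A,U,U⟩`. -/
def IsStarter (P : PreIpomset σ) : Prop := P.IsIpomset ∧ P.Discrete ∧ P.T = Set.univ

/-- A terminator `⟨U,U,U∖B⟩`. -/
def IsTerminator (P : PreIpomset σ) : Prop := P.IsIpomset ∧ P.Discrete ∧ P.S = Set.univ

/-- An identity `⟨U,U,U⟩`. -/
def IsIdentityIpomset (P : PreIpomset σ) : Prop :=
  P.IsIpomset ∧ P.Discrete ∧ P.S = Set.univ ∧ P.T = Set.univ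

def IsProperStarter (P : PreIpomset σ) : Prop := P.IsStarter ∧ P.S ≠ Set.univ

def IsProperTerminator (P : PreIpomset σ) : Prop := P.IsTerminator ∧ P.T ≠ Set.univ

/-- Isomorphism of (pre)ipomsets. -/
def Iso (P Q : PreIpomset σ) : Prop :=
  ∃ f : P.carrier ≃ Q.carrier,
    (∀ x y, P.lt x y ↔ Q.lt (f x) (f y)) ∧
    (∀ x y, P.evord x y ↔ Q.evord (f x) (f y)) ∧
    (∀ x, x ∈ P.S ↔ f x ∈ Q.S) ∧
    (∀ x, x ∈ P.T ↔ f x ∈ Q.T) ∧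
    (∀ x, Q.lab (f x) = P.lab x)

/-- Restriction to a subset of events, with empty interfaces. -/
def restrict (P : PreIpomset σ) (K : Set P.carrier) : PreIpomset σ where
  carrier := {x : P.carrier // x ∈ K}
  fin := by haveI := P.fin; exact inferInstance
  lt := fun x y => P.lt x.val y.val
  evord := fun x y => P.evord x.val y.val
  S := ∅
  T := ∅
  lab := fun x => P.lab x.val

/-- The source interface of `P` as a conclist. -/
def srcIface (P : PreIpomset σ) : PreIpomset σ := P.restrict P.S

/-- The target interface of `P` as a conclist. -/
def tgtIface (P : PreIpomset σ) : PreIpomset σ := P.restrict P.T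

/-- The underlying conclist (forget interfaces). -/
def conclistOf (P : PreIpomset σ) : PreIpomset σ := { P with S := ∅, T := ∅ }

/-- The identity ipomset `⟨U,U,U⟩` on the conclist underlying `P`. -/
def idOf (P : PreIpomset σ) : PreIpomset σ := { P with S := Set.univ, T := Set.univ }

/-- The discrete ipomset `⟨S,U,T⟩` on the conclist underlying `P`. -/
def withIfaces (P : PreIpomset σ) (S T : Set P.carrier) : PreIpomset σ :=
  { P with S := S, T := T }

/-- The starter `⟨U∖A,U,U⟩` on the conclist underlying `P`. -/
def starter (P : PreIpomset σ) (A : Set P.carrier) : PreIpomset σ :=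
  { P with S := Aᶜ, T := Set.univ }

/-- The terminator `⟨U,U,U∖B⟩` on the conclist underlying `P`. -/
def terminator (P : PreIpomset σ) (B : Set P.carrier) : PreIpomset σ :=
  { P with S := Set.univ, T := Bᶜ }

/-- A matching `T_P ≅ S_Q`, i.e. an isomorphism of interface conclists
along which `P` and `Q` may be glued. -/
structure Matching (P Q : PreIpomset σ) : Type where
  g : {x : P.carrier // x ∈ P.T} ≃ {y : Q.carrier // y ∈ Q.S}
  evord_iff : ∀ x y, P.evord x.val y.val ↔ Q.evord (g x).val (g y).val
  lab_eq : ∀ x, Q.lab (g x).val = P.lab x.val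

def gluePOf (P Q : PreIpomset σ) :
    P.carrier ⊕ {y : Q.carrier // y ∉ Q.S} → Option P.carrier
  | Sum.inl x => some x
  | Sum.inr _ => none

noncomputable def glueQOf (P Q : PreIpomset σ) (m : Matching P Q) :
    P.carrier ⊕ {y : Q.carrier // y ∉ Q.S} → Option Q.carrier
  | Sum.inl x => if h : x ∈ P.T then some (m.g ⟨x, h⟩).val else none
  | Sum.inr y => some y.val

/-- The gluing `P * Q` along a matching `T_P ≅ S_Q`. -/
noncomputable def glue (P Q : PreIpomset σ) (m : Matching P Q) : PreIpomset σ where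
  carrier := P.carrier ⊕ {y : Q.carrier // y ∉ Q.S}
  fin := by haveI := P.fin; haveI := Q.fin; exact inferInstance
  lt := fun u v =>
    (∃ x x', gluePOf P Q u = some x ∧ gluePOf P Q v = some x' ∧ P.lt x x') ∨
    (∃ y y', glueQOf P Q m u = some y ∧ glueQOf P Q m v = some y' ∧ Q.lt y y') ∨
    ((∃ x, gluePOf P Q u = some x ∧ x ∉ P.T) ∧
     (∃ y, glueQOf P Q m v = some y ∧ y ∉ Q.S))
  evord := fun u v =>
    (∃ x x', gluePOf P Q u = some x ∧ gluePOf P Q v = some x' ∧ P.evord x x') ∨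
    (∃ y y', glueQOf P Q m u = some y ∧ glueQOf P Q m v = some y' ∧ Q.evord y y')
  S := {u | ∃ x, gluePOf P Q u = some x ∧ x ∈ P.S}
  T := {u | ∃ y, glueQOf P Q m u = some y ∧ y ∈ Q.T}
  lab := Sum.elim P.lab fun y => Q.lab y.val

/-- `R` is (isomorphic to) the gluing `P * Q`; in particular `T_P ≅ S_Q`. -/
def GlueRel (P Q R : PreIpomset σ) : Prop :=
  ∃ m : Matching P Q, Iso (glue P Q m) R

/-- A choice of gluing (used when a matching is known to exist). -/
noncomputable def glueChoice (P Q : PreIpomset σ) : PreIpomset σ :=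
  if h : Nonempty (Matching P Q) then glue P Q h.some else P

/-- `GluesTo l R`: `R` is the gluing of the nonempty list `l` of ipomsets. -/
inductive GluesTo : List (PreIpomset σ) → PreIpomset σ → Prop
  | single {P R : PreIpomset σ} : Iso P R → GluesTo [P] R
  | cons {P : PreIpomset σ} {l : List (PreIpomset σ)} {R' R : PreIpomset σ} :
      GluesTo l R' → GlueRel P R' R → GluesTo (P :: l) R

/-- Proper starters and proper terminators alternate. -/
def Alternating (l : List (PreIpomset σ)) : Prop :=
  l.Chain' fun P Q => (IsProperStarter P ∧ IsProperTerminator Q) ∨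
    (IsProperTerminator P ∧ IsProperStarter Q)

/-- `l` is a sparse step decomposition of `R`: either a single identity, or an
alternating sequence of proper starters and proper terminators gluing to `R`. -/
def IsSparseDecomp (l : List (PreIpomset σ)) (R : PreIpomset σ) : Prop :=
  GluesTo l R ∧
  ((∃ I, l = [I] ∧ IsIdentityIpomset I) ∨
   ((∀ P ∈ l, IsProperStarter P ∨ IsProperTerminator P) ∧ Alternating l))

/-- `P ∈ iPoms^q`: the sparse step decomposition of `P` does not end with a
proper starter (i.e. it ends with a terminator or is a single identity). -/
def InQ (P : PreIpomset σ) : Prop :=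
  ∃ l, IsSparseDecomp l P ∧ ∀ Q, l.getLast? = some Q → ¬ IsProperStarter Q

end PreIpomset

open PreIpomset

variable {σ : Type}

/-! ### Languages and rational operations -/

def glueLang (L M : Set (PreIpomset σ)) : Set (PreIpomset σ) :=
  {R | ∃ P ∈ L, ∃ Q ∈ M, GlueRel P Q R}

def powLang (L : Set (PreIpomset σ)) : ℕ → Set (PreIpomset σ)
  | 0 => L
  | n + 1 => glueLang L (powLang L n)

/-- `L⁺ = ⋃_{n ≥ 1} Lⁿ`. -/
def plusLang (L : Set (PreIpomset σ)) : Set (PreIpomset σ) := ⋃ n, powLang L n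

/-- Rational languages of (interval) ipomsets: generated from `∅` and singletons
(up to isomorphism) of starters and terminators by union, gluing composition and plus. -/
inductive Rational : Set (PreIpomset σ) → Prop
  | empty : Rational ∅
  | single {P : PreIpomset σ} : IsStarter P ∨ IsTerminator P → Rational {Q | Iso Q P}
  | union {L M : Set (PreIpomset σ)} : Rational L → Rational M → Rational (L ∪ M)
  | concat {L M : Set (PreIpomset σ)} : Rational L → Rational M → Rational (glueLang L M)
  | plus {L : Set (PreIpomset σ)} : Rational L → Rational (plusLang L)

/-! ### P-automata -/

structure PAutomaton (σ : Type) : Type 1 where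
  Q : Type
  E : Type
  src : E → Q
  tgt : E → Q
  lab : E → PreIpomset σ
  mu : Q → PreIpomset σ
  start : Set Q
  accept : Set Q

namespace PAutomaton

variable {σ : Type}

/-- The axioms of a P-automaton: finite sets of states and transitions, states
labelled by conclists, transitions by interval ipomsets, with
`μ(s(e)) ≅ S_{λ(e)}` and `μ(t(e)) ≅ T_{λ(e)}`. -/
def IsPA (A : PAutomaton σ) : Prop :=
  Finite A.Q ∧ Finite A.E ∧
  (∀ q, (A.mu q).IsConclist) ∧ (∀ e, (A.lab e).IsIpomset) ∧
  (∀ e, Iso (A.lab e).srcIface (A.mu (A.src e))) ∧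
  (∀ e, Iso (A.lab e).tgtIface (A.mu (A.tgt e)))

/-- ST-automaton: every label is a starter or a terminator. -/
def IsST (A : PAutomaton σ) : Prop := ∀ e, IsStarter (A.lab e) ∨ IsTerminator (A.lab e)

/-- gST-automaton: every label is discrete. -/
def IsGST (A : PAutomaton σ) : Prop := ∀ e, (A.lab e).Discrete

/-- No transition is labelled by an identity. -/
def NoSilent (A : PAutomaton σ) : Prop := ∀ e, ¬ IsIdentityIpomset (A.lab e)

/-- A reduced gST-automaton: no silent transitions and conditions (a)–(f). -/
def Reduced (A : PAutomaton σ) : Prop :=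
  NoSilent A ∧
  (∀ e, A.tgt e ∉ A.start) ∧
  (∀ e, A.src e ∉ A.accept) ∧
  (∀ e, (A.lab e).T = Set.univ → A.tgt e ∈ A.accept) ∧
  (∀ e, (A.lab e).S = Set.univ → A.src e ∈ A.start) ∧
  (∀ e e', A.src e ∈ A.start → A.src e' = A.src e → e' = e) ∧
  (∀ e e', A.tgt e ∈ A.accept → A.tgt e' = A.tgt e → e' = e)

/-- Paths in a P-automaton, from a state to a state. -/
inductive Path (A : PAutomaton σ) : A.Q → A.Q → Type
  | nil (q : A.Q) : Path A q q
  | cons (e : A.E) {r : A.Q} (rest : Path A (A.tgt e) r) : Path A (A.src e) r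

/-- The (interval) ipomset recognized by a path, up to isomorphism:
the gluing of the labels of its transitions (an identity for a constant path). -/
inductive Rec {A : PAutomaton σ} : ∀ {p r : A.Q}, Path A p r → PreIpomset σ → Prop
  | nil (q : A.Q) (R : PreIpomset σ) : Iso (A.mu q).idOf R → Rec (Path.nil q) R
  | cons (e : A.E) {r : A.Q} (rest : Path A (A.tgt e) r) {R' R : PreIpomset σ} :
      Rec rest R' → GlueRel (A.lab e) R' R → Rec (Path.cons e rest) R

/-- The language of a P-automaton. -/
def lang (A : PAutomaton σ) : Set (PreIpomset σ) :=
  {R | ∃ p r, ∃ α : Path A p r, p ∈ A.start ∧ r ∈ A.accept ∧ Rec α R}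

/-- Dimension of a transition. -/
noncomputable def dim (A : PAutomaton σ) (e : A.E) : ℕ := Nat.card (A.lab e).carrier

/-- Number of bad starter transitions of dimension `n`. -/
noncomputable def bst (A : PAutomaton σ) (n : ℕ) : ℕ :=
  Nat.card {e : A.E // IsProperStarter (A.lab e) ∧ A.tgt e ∉ A.accept ∧ A.dim e = n}

/-- Number of bad terminator transitions of dimension `n`. -/
noncomputable def btt (A : PAutomaton σ) (n : ℕ) : ℕ :=
  Nat.card {e : A.E // IsProperTerminator (A.lab e) ∧ A.src e ∉ A.start ∧ A.dim e = n}

/-- The automaton `𝒜_c`: remove the starter transition `c`; for every transition `e`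
out of `t(c)` add a transition `e*` from `s(c)` to `t(e)` labelled `λ(c) * λ(e)`. -/
noncomputable def Ac (A : PAutomaton σ) (c : A.E) : PAutomaton σ where
  Q := A.Q
  E := {e : A.E // e ≠ c} ⊕ {e : A.E // A.src e = A.tgt c}
  src := Sum.elim (fun e => A.src e.val) fun _ => A.src c
  tgt := Sum.elim (fun e => A.tgt e.val) fun e => A.tgt e.val
  lab := Sum.elim (fun e => A.lab e.val) fun e => glueChoice (A.lab c) (A.lab e.val)
  mu := A.mu
  start := A.start
  accept := A.accept

/-- Disjoint union of two P-automata. -/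
def sumAut (A B : PAutomaton σ) : PAutomaton σ where
  Q := A.Q ⊕ B.Q
  E := A.E ⊕ B.E
  src := Sum.elim (Sum.inl ∘ A.src) (Sum.inr ∘ B.src)
  tgt := Sum.elim (Sum.inl ∘ A.tgt) (Sum.inr ∘ B.tgt)
  lab := Sum.elim A.lab B.lab
  mu := Sum.elim A.mu B.mu
  start := Sum.inl '' A.start ∪ Sum.inr '' B.start
  accept := Sum.inl '' A.accept ∪ Sum.inr '' B.accept

/-- Concatenation `𝒜 * ℬ`: disjoint union together with identity-labelled transitions
from accepting states of `𝒜` to initial states of `ℬ` with isomorphic state labels. -/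
def concatAut (A B : PAutomaton σ) : PAutomaton σ where
  Q := A.Q ⊕ B.Q
  E := A.E ⊕ B.E ⊕
    {pq : A.Q × B.Q // pq.1 ∈ A.accept ∧ pq.2 ∈ B.start ∧ Iso (A.mu pq.1) (B.mu pq.2)}
  src := Sum.elim (Sum.inl ∘ A.src)
    (Sum.elim (Sum.inr ∘ B.src) fun pq => Sum.inl pq.val.1)
  tgt := Sum.elim (Sum.inl ∘ A.tgt)
    (Sum.elim (Sum.inr ∘ B.tgt) fun pq => Sum.inr pq.val.2)
  lab := Sum.elim A.lab (Sum.elim B.lab fun pq => (A.mu pq.val.1).idOf)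
  mu := Sum.elim A.mu B.mu
  start := Sum.inl '' A.start
  accept := Sum.inr '' B.accept

/-- Kleene plus `𝒜⁺`: add identity-labelled transitions from accepting states
to initial states with isomorphic state labels. -/
def plusAut (A : PAutomaton σ) : PAutomaton σ where
  Q := A.Q
  E := A.E ⊕
    {pq : A.Q × A.Q // pq.1 ∈ A.accept ∧ pq.2 ∈ A.start ∧ Iso (A.mu pq.1) (A.mu pq.2)}
  src := Sum.elim A.src fun pq => pq.val.1
  tgt := Sum.elim A.tgt fun pq => pq.val.2
  lab := Sum.elim A.lab fun pq => (A.mu pq.val.1).idOf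
  mu := A.mu
  start := A.start
  accept := A.accept

end PAutomaton

/-! ### Partial HDAs -/

/-- `g` exhibits `V` as the sub-conclist of `U` obtained by removing the events in `K`. -/
def IsFaceEmbed (U : PreIpomset σ) (K : Set U.carrier) (V : PreIpomset σ)
    (g : V.carrier → U.carrier) : Prop :=
  Function.Injective g ∧ Set.range g = Kᶜ ∧
  (∀ u v, V.evord u v ↔ U.evord (g u) (g v)) ∧
  (∀ u, U.lab (g u) = V.lab u)

/-- The data of a partial higher-dimensional automaton: cells labelled by conclists,
partial face maps, initial and accepting cells. -/
structure PrePHDA (σ : Type) : Type 1 where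
  cell : Type
  ev : cell → PreIpomset σ
  face : (x : cell) → Set (ev x).carrier → Set (ev x).carrier → Option cell
  start : Set cell
  accept : Set cell

namespace PrePHDA

variable {σ : Type}

/-- The lax precubical identity: whenever `δ_{A,B}(x)` and `δ_{C,D}(δ_{A,B}(x))` are
defined, `δ_{A∪C,B∪D}(x)` is defined and equal to the composite. -/
def IsLax (X : PrePHDA σ) : Prop :=
  ∀ x (A B : Set (X.ev x).carrier) y, X.face x A B = some y →
    ∀ g, IsFaceEmbed (X.ev x) (A ∪ B) (X.ev y) g →
      ∀ (C D : Set (X.ev y).carrier) z, X.face y C D = some z →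
        X.face x (A ∪ g '' C) (B ∪ g '' D) = some z

/-- The axioms of a partial HDA. -/
def IsPHDA (X : PrePHDA σ) : Prop :=
  (∀ x, (X.ev x).IsConclist) ∧
  (∀ x, X.face x ∅ ∅ = some x) ∧
  (∀ x A B y, X.face x A B = some y →
    Disjoint A B ∧ ∃ g, IsFaceEmbed (X.ev x) (A ∪ B) (X.ev y) g) ∧
  IsLax X

/-- Strictness: `δ_{C,D} ∘ δ_{A,B} = δ_{A∪C,B∪D}` as partial functions. -/
def IsStrict (X : PrePHDA σ) : Prop :=
  IsPHDA X ∧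
  (∀ x (A B : Set (X.ev x).carrier) y, X.face x A B = some y →
    ∀ g, IsFaceEmbed (X.ev x) (A ∪ B) (X.ev y) g →
      ∀ C D : Set (X.ev y).carrier,
        X.face x (A ∪ g '' C) (B ∪ g '' D) = X.face y C D) ∧
  (∀ x (A B C D : Set (X.ev x).carrier),
    Disjoint (A ∪ C) (B ∪ D) → C ∪ D ⊆ (A ∪ B)ᶜ →
    X.face x A B = none → X.face x (A ∪ C) (B ∪ D) = none)

/-- Paths in a partial HDA: sequences of upsteps and downsteps. -/
inductive Path (X : PrePHDA σ) : X.cell → X.cell → Type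
  | nil (x : X.cell) : Path X x x
  | up {x z : X.cell} (y : X.cell) (A : Set (X.ev y).carrier)
      (h : X.face y A ∅ = some x) (rest : Path X y z) : Path X x z
  | down {z w : X.cell} (y : X.cell) (B : Set (X.ev y).carrier)
      (h : X.face y ∅ B = some z) (rest : Path X z w) : Path X y w

/-- Directions of the steps of a path (`true` = upstep). -/
def Path.dirs {X : PrePHDA σ} : {x z : X.cell} → Path X x z → List Bool
  | _, _, .nil _ => []
  | _, _, .up _ _ _ rest => true :: rest.dirs
  | _, _, .down _ _ _ rest => false :: rest.dirs

/-- A path is sparse if upsteps and downsteps alternate. -/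
def Path.Sparse {X : PrePHDA σ} {x z : X.cell} (α : Path X x z) : Prop :=
  α.dirs.Chain' (· ≠ ·)

/-- Concatenation of paths. -/
def Path.comp {X : PrePHDA σ} : {x y z : X.cell} → Path X x y → Path X y z → Path X x z
  | _, _, _, .nil _, β => β
  | _, _, _, .up y A h rest, β => .up y A h (rest.comp β)
  | _, _, _, .down y B h rest, β => .down y B h (rest.comp β)

/-- The ipomset recognized by a path, up to isomorphism: the gluing of the starters
and terminators of its steps (an identity for a constant path). -/
inductive Rec {X : PrePHDA σ} : ∀ {x z : X.cell}, Path X x z → PreIpomset σ → Prop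
  | nil (x : X.cell) (R : PreIpomset σ) :
      Iso (X.ev x).idOf R → Rec (Path.nil x) R
  | up {x z : X.cell} (y : X.cell) (A : Set (X.ev y).carrier)
      (h : X.face y A ∅ = some x) (rest : Path X y z) {R' R : PreIpomset σ} :
      Rec rest R' → GlueRel ((X.ev y).starter A) R' R → Rec (Path.up y A h rest) R
  | down {z w : X.cell} (y : X.cell) (B : Set (X.ev y).carrier)
      (h : X.face y ∅ B = some z) (rest : Path X z w) {R' R : PreIpomset σ} :
      Rec rest R' → GlueRel ((X.ev y).terminator B) R' R → Rec (Path.down y B h rest) R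

/-- The language of a partial HDA. -/
def lang (X : PrePHDA σ) : Set (PreIpomset σ) :=
  {R | ∃ x z, ∃ α : Path X x z, x ∈ X.start ∧ z ∈ X.accept ∧ Rec α R}

/-- `X(K,P)`: cells reachable from `K` by a path recognizing `P`. -/
def track (X : PrePHDA σ) (K : Set X.cell) (P : PreIpomset σ) : Set X.cell :=
  {x | ∃ s, ∃ α : Path X s x, s ∈ K ∧ Rec α P}

/-- Deterministic partial HDA: at most one initial cell per conclist, and lower
face maps are "injective" in the appropriate sense. -/
def Deterministic (X : PrePHDA σ) : Prop :=
  (∀ x y, x ∈ X.start → y ∈ X.start → Iso (X.ev x) (X.ev y) → x = y) ∧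
  (∀ (y y' : X.cell) (A : Set (X.ev y).carrier) (A' : Set (X.ev y').carrier)
      (x : X.cell), X.face y A ∅ = some x → X.face y' A' ∅ = some x →
    (∃ f : (X.ev y).carrier ≃ (X.ev y').carrier,
      (∀ u v, (X.ev y).evord u v ↔ (X.ev y').evord (f u) (f v)) ∧
      (∀ u, (X.ev y').lab (f u) = (X.ev y).lab u) ∧ f '' A = A') → y = y')

end PrePHDA

/-! ### Relational HDAs -/

/-- The data of a relational HDA: face relations instead of partial face maps. -/
structure PreRHDA (σ : Type) : Type 1 where
  cell : Type
  ev : cell → PreIpomset σ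
  face : (x : cell) → Set (ev x).carrier → Set (ev x).carrier → Set cell
  start : Set cell
  accept : Set cell

namespace PreRHDA

variable {σ : Type}

/-- The axioms of a relational HDA, with the lax precubical identity
`δ_{C,D} ∘ δ_{A,B} ⊆ δ_{A∪C,B∪D}`. -/
def IsRHDA (X : PreRHDA σ) : Prop :=
  (∀ x, (X.ev x).IsConclist) ∧
  (∀ x, X.face x ∅ ∅ = {x}) ∧
  (∀ x A B y, y ∈ X.face x A B →
    Disjoint A B ∧ ∃ g, IsFaceEmbed (X.ev x) (A ∪ B) (X.ev y) g) ∧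
  (∀ x (A B : Set (X.ev x).carrier) y, y ∈ X.face x A B →
    ∀ g, IsFaceEmbed (X.ev x) (A ∪ B) (X.ev y) g →
      ∀ (C D : Set (X.ev y).carrier) z, z ∈ X.face y C D →
        z ∈ X.face x (A ∪ g '' C) (B ∪ g '' D))

/-- Paths in a relational HDA. -/
inductive Path (X : PreRHDA σ) : X.cell → X.cell → Type 1
  | nil (x : X.cell) : Path X x x
  | up {x z : X.cell} (y : X.cell) (A : Set (X.ev y).carrier)
      (h : x ∈ X.face y A ∅) (rest : Path X y z) : Path X x z
  | down {z w : X.cell} (y : X.cell) (B : Set (X.ev y).carrier)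
      (h : z ∈ X.face y ∅ B) (rest : Path X z w) : Path X y w

/-- The ipomset recognized by a path in a relational HDA. -/
inductive Rec {X : PreRHDA σ} : ∀ {x z : X.cell}, Path X x z → PreIpomset σ → Prop
  | nil (x : X.cell) (R : PreIpomset σ) :
      Iso (X.ev x).idOf R → Rec (Path.nil x) R
  | up {x z : X.cell} (y : X.cell) (A : Set (X.ev y).carrier)
      (h : x ∈ X.face y A ∅) (rest : Path X y z) {R' R : PreIpomset σ} :
      Rec rest R' → GlueRel ((X.ev y).starter A) R' R → Rec (Path.up y A h rest) R
  | down {z w : X.cell} (y : X.cell) (B : Set (X.ev y).carrier)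
      (h : z ∈ X.face y ∅ B) (rest : Path X z w) {R' R : PreIpomset σ} :
      Rec rest R' → GlueRel ((X.ev y).terminator B) R' R → Rec (Path.down y B h rest) R

/-- The language of a relational HDA. -/
def lang (X : PreRHDA σ) : Set (PreIpomset σ) :=
  {R | ∃ x z, ∃ α : Path X x z, x ∈ X.start ∧ z ∈ X.accept ∧ Rec α R}

/-- The ST-automaton `ST(X)` of a relational HDA `X`: states are cells, transitions
mimic the starting and terminating of events. -/
def stAut (X : PreRHDA σ) : PAutomaton σ where
  Q := X.cell
  E := (Σ q : X.cell, Σ A : Set (X.ev q).carrier, {p : X.cell // p ∈ X.face q A ∅}) ⊕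
       (Σ q : X.cell, Σ B : Set (X.ev q).carrier, {r : X.cell // r ∈ X.face q ∅ B})
  src := Sum.elim (fun t => t.2.2.val) fun t => t.1
  tgt := Sum.elim (fun t => t.1) fun t => t.2.2.val
  lab := Sum.elim (fun t => (X.ev t.1).starter t.2.1) fun t => (X.ev t.1).terminator t.2.1
  mu := X.ev
  start := X.start
  accept := X.accept

end PreRHDA

/-! ### The partial HDA of a reduced gST-automaton -/

open PAutomaton

/-- The cell representing a state `q` in `X(𝒜)`: `q` is merged with a terminator
transition out of it or a starter transition into it, if such exists. -/
noncomputable def cellOfState (A : PAutomaton σ) (q : A.Q) : A.E ⊕ A.Q :=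
  if h : ∃ e, IsTerminator (A.lab e) ∧ A.src e = q then Sum.inl h.choose
  else if h' : ∃ e, IsStarter (A.lab e) ∧ A.tgt e = q then Sum.inl h'.choose
  else Sum.inr q

/-- `X(𝒜)`: cells are `(Q ⊔ E)/∼`, with the only defined (nontrivial) face maps
`δ⁰_{U∖S}([e]) = [s(e)]` and `δ¹_{U∖T}([e]) = [t(e)]` for `λ(e) = ⟨S,U,T⟩`. -/
noncomputable def XofA (A : PAutomaton σ) : PrePHDA σ where
  cell := A.E ⊕ A.Q
  ev := Sum.elim (fun e => (A.lab e).conclistOf) A.mu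
  face := fun x =>
    match x with
    | Sum.inl e => fun As Bs =>
        if As = ∅ ∧ Bs = ∅ then some (Sum.inl e)
        else if As = (A.lab e).Sᶜ ∧ Bs = ∅ then some (cellOfState A (A.src e))
        else if As = ∅ ∧ Bs = (A.lab e).Tᶜ then some (cellOfState A (A.tgt e))
        else none
    | Sum.inr q => fun As Bs =>
        if As = ∅ ∧ Bs = ∅ then some (Sum.inr q) else none
  start := cellOfState A '' A.start
  accept := cellOfState A '' A.accept

end HDA

namespace HDA

open PreIpomset PAutomaton

variable {σ : Type}

namespace PreIpomset

lemma isoRefl (P : PreIpomset σ) : Iso P P :=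
  ⟨Equiv.refl _, fun _ _ => Iff.rfl, fun _ _ => Iff.rfl, fun _ => Iff.rfl,
    fun _ => Iff.rfl, fun _ => rfl⟩

lemma isoSymm {P Q : PreIpomset σ} (h : Iso P Q) : Iso Q P := by
  obtain ⟨f, h1, h2, h3, h4, h5⟩ := h
  refine ⟨f.symm, fun x y => ?_, fun x y => ?_, fun x => ?_, fun x => ?_, fun x => ?_⟩
  · rw [h1 (f.symm x) (f.symm y), f.apply_symm_apply, f.apply_symm_apply]
  · rw [h2 (f.symm x) (f.symm y), f.apply_symm_apply, f.apply_symm_apply]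
  · rw [h3 (f.symm x), f.apply_symm_apply]
  · rw [h4 (f.symm x), f.apply_symm_apply]
  · rw [← h5 (f.symm x), f.apply_symm_apply]

lemma isoTrans {P Q R : PreIpomset σ} (h : Iso P Q) (h' : Iso Q R) : Iso P R := by
  obtain ⟨f, h1, h2, h3, h4, h5⟩ := h
  obtain ⟨g, g1, g2, g3, g4, g5⟩ := h'
  exact ⟨f.trans g, fun x y => (h1 x y).trans (g1 _ _), fun x y => (h2 x y).trans (g2 _ _),
    fun x => (h3 x).trans (g3 _), fun x => (h4 x).trans (g4 _),
    fun x => (g5 (f x)).trans (h5 x)⟩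

/-- Source minimality and target maximality. -/
def Good (P : PreIpomset σ) : Prop :=
  (∀ x ∈ P.S, ∀ y, ¬ P.lt y x) ∧ (∀ x ∈ P.T, ∀ y, ¬ P.lt x y)

lemma IsIpomset.good {P : PreIpomset σ} (h : P.IsIpomset) : Good P :=
  ⟨h.src_min, h.tgt_max⟩

lemma good_of_discrete {P : PreIpomset σ} (h : P.Discrete) : Good P :=
  ⟨fun _ _ y hy => h y _ hy, fun x _ y hy => h x y hy⟩

lemma good_idOf {P : PreIpomset σ} (h : P.Discrete) : Good P.idOf :=
  good_of_discrete h

lemma good_iso {P Q : PreIpomset σ} (h : Iso P Q) (hP : Good P) : Good Q := by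
  obtain ⟨f, h1, h2, h3, h4, h5⟩ := h
  constructor
  · intro x hx y hy
    have hx' : f.symm x ∈ P.S := by rw [h3, f.apply_symm_apply]; exact hx
    refine hP.1 _ hx' (f.symm y) ?_
    rw [h1, f.apply_symm_apply, f.apply_symm_apply]; exact hy
  · intro x hx y hy
    have hx' : f.symm x ∈ P.T := by rw [h4, f.apply_symm_apply]; exact hx
    refine hP.2 _ hx' (f.symm y) ?_
    rw [h1, f.apply_symm_apply, f.apply_symm_apply]; exact hy

variable {P Q : PreIpomset σ} (m : Matching P Q)

lemma g_mem_S (t : {x // x ∈ P.T}) : (m.g t).val ∈ Q.S := (m.g t).2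

/- ### Case lemmas for `glue` -/

lemma glue_lab_inl (x : P.carrier) : (glue P Q m).lab (Sum.inl x) = P.lab x := rfl
lemma glue_lab_inr (y : {y : Q.carrier // y ∉ Q.S}) :
    (glue P Q m).lab (Sum.inr y) = Q.lab y.val := rfl

lemma glue_S_inl (x : P.carrier) :
    Sum.inl x ∈ (glue P Q m).S ↔ x ∈ P.S := by
  show (∃ x', gluePOf P Q (Sum.inl x) = some x' ∧ x' ∈ P.S) ↔ _
  simp [glue, gluePOf]

lemma glue_S_inr (y : {y : Q.carrier // y ∉ Q.S}) :
    Sum.inr y ∉ (glue P Q m).S := by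
  show ¬ ∃ x', gluePOf P Q (Sum.inr y) = some x' ∧ x' ∈ P.S
  simp [glue, gluePOf]

lemma glue_T_inl (x : P.carrier) :
    Sum.inl x ∈ (glue P Q m).T ↔ ∃ hx : x ∈ P.T, (m.g ⟨x, hx⟩).val ∈ Q.T := by
  show (∃ y', glueQOf P Q m (Sum.inl x) = some y' ∧ y' ∈ Q.T) ↔ _
  by_cases hx : x ∈ P.T <;> simp [glue, glueQOf, hx]

lemma glue_T_inr (y : {y : Q.carrier // y ∉ Q.S}) :
    Sum.inr y ∈ (glue P Q m).T ↔ y.val ∈ Q.T := by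
  show (∃ y', glueQOf P Q m (Sum.inr y) = some y' ∧ y' ∈ Q.T) ↔ _
  simp [glue, glueQOf]

lemma glue_lt_inl_inl (x x' : P.carrier) :
    (glue P Q m).lt (Sum.inl x) (Sum.inl x') ↔
      P.lt x x' ∨ ∃ (hx : x ∈ P.T) (hx' : x' ∈ P.T),
        Q.lt (m.g ⟨x, hx⟩).val (m.g ⟨x', hx'⟩).val := by
  by_cases hx : x ∈ P.T <;> by_cases hx' : x' ∈ P.T <;>
    simp [glue, gluePOf, glueQOf, hx, hx', g_mem_S]

lemma glue_lt_inl_inr (x : P.carrier) (y : {y : Q.carrier // y ∉ Q.S}) :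
    (glue P Q m).lt (Sum.inl x) (Sum.inr y) ↔
      (∃ hx : x ∈ P.T, Q.lt (m.g ⟨x, hx⟩).val y.val) ∨ x ∉ P.T := by
  by_cases hx : x ∈ P.T <;> simp [glue, gluePOf, glueQOf, hx, y.2]

lemma glue_lt_inr_inl (y : {y : Q.carrier // y ∉ Q.S}) (x : P.carrier) :
    (glue P Q m).lt (Sum.inr y) (Sum.inl x) ↔
      ∃ hx : x ∈ P.T, Q.lt y.val (m.g ⟨x, hx⟩).val := by
  by_cases hx : x ∈ P.T <;> simp [glue, gluePOf, glueQOf, hx, g_mem_S]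

lemma glue_lt_inr_inr (y y' : {y : Q.carrier // y ∉ Q.S}) :
    (glue P Q m).lt (Sum.inr y) (Sum.inr y') ↔ Q.lt y.val y'.val := by
  simp [glue, gluePOf, glueQOf]

lemma glue_evord_inl_inl (x x' : P.carrier) :
    (glue P Q m).evord (Sum.inl x) (Sum.inl x') ↔
      P.evord x x' ∨ ∃ (hx : x ∈ P.T) (hx' : x' ∈ P.T),
        Q.evord (m.g ⟨x, hx⟩).val (m.g ⟨x', hx'⟩).val := by
  by_cases hx : x ∈ P.T <;> by_cases hx' : x' ∈ P.T <;>
    simp [glue, gluePOf, glueQOf, hx, hx']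

lemma glue_evord_inl_inr (x : P.carrier) (y : {y : Q.carrier // y ∉ Q.S}) :
    (glue P Q m).evord (Sum.inl x) (Sum.inr y) ↔
      ∃ hx : x ∈ P.T, Q.evord (m.g ⟨x, hx⟩).val y.val := by
  by_cases hx : x ∈ P.T <;> simp [glue, gluePOf, glueQOf, hx]

lemma glue_evord_inr_inl (y : {y : Q.carrier // y ∉ Q.S}) (x : P.carrier) :
    (glue P Q m).evord (Sum.inr y) (Sum.inl x) ↔
      ∃ hx : x ∈ P.T, Q.evord y.val (m.g ⟨x, hx⟩).val := by
  by_cases hx : x ∈ P.T <;> simp [glue, gluePOf, glueQOf, hx]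

lemma glue_evord_inr_inr (y y' : {y : Q.carrier // y ∉ Q.S}) :
    (glue P Q m).evord (Sum.inr y) (Sum.inr y') ↔ Q.evord y.val y'.val := by
  simp [glue, gluePOf, glueQOf]

end PreIpomset

end HDA
namespace HDA

open PreIpomset PAutomaton

variable {σ : Type}

namespace PreIpomset

variable {P Q : PreIpomset σ} (m : Matching P Q)

lemma mem_glue_T {u} : u ∈ (glue P Q m).T ↔
    ∃ y, glueQOf P Q m u = some y ∧ y ∈ Q.T := Iff.rfl

lemma mem_glue_S {u} : u ∈ (glue P Q m).S ↔
    ∃ x, gluePOf P Q u = some x ∧ x ∈ P.S := Iff.rfl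

lemma gluePOf_eq_some {u : (glue P Q m).carrier} {x : P.carrier} :
    gluePOf P Q u = some x ↔ u = Sum.inl x := by
  cases u with
  | inl a =>
    simp only [gluePOf, Option.some.injEq]
    exact ⟨congrArg _, fun h => Sum.inl.inj h⟩
  | inr y => simp [gluePOf]

lemma glueQOf_inj {u v : (glue P Q m).carrier} {y : Q.carrier}
    (hu : glueQOf P Q m u = some y) (hv : glueQOf P Q m v = some y) : u = v := by
  cases u with
  | inl x =>
    cases v with
    | inl x' =>
      by_cases hx : x ∈ P.T <;> by_cases hx' : x' ∈ P.T <;>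
        simp [glueQOf, hx, hx'] at hu hv
      have : m.g ⟨x, hx⟩ = m.g ⟨x', hx'⟩ := Subtype.ext (hu.trans hv.symm)
      have := m.g.injective this
      exact congrArg Sum.inl (by simpa using congrArg Subtype.val this)
    | inr y' =>
      by_cases hx : x ∈ P.T <;> simp [glueQOf, hx] at hu hv
      exact absurd (hu ▸ g_mem_S m ⟨x, hx⟩) (hv ▸ y'.2)
  | inr y0 =>
    cases v with
    | inl x' =>
      by_cases hx' : x' ∈ P.T <;> simp [glueQOf, hx'] at hu hv
      exact absurd (hv ▸ g_mem_S m ⟨x', hx'⟩) (hu ▸ y0.2)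
    | inr y' =>
      simp [glueQOf] at hu hv
      exact congrArg Sum.inr (Subtype.ext (hu.trans hv.symm))

noncomputable def teqFun (u : {u // u ∈ (glue P Q m).T}) : {y // y ∈ Q.T} :=
  ⟨((mem_glue_T m).mp u.2).choose, ((mem_glue_T m).mp u.2).choose_spec.2⟩

lemma teqFun_spec (u : {u // u ∈ (glue P Q m).T}) :
    glueQOf P Q m u.val = some (teqFun m u).val :=
  ((mem_glue_T m).mp u.2).choose_spec.1

lemma glueQOf_inl_mem (hx : x ∈ P.T) :
    glueQOf P Q m (Sum.inl x) = some (m.g ⟨x, hx⟩).val := by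
  simp [glueQOf, hx]

lemma glueQOf_inr (y : {y : Q.carrier // y ∉ Q.S}) :
    glueQOf P Q m (Sum.inr y) = some y.val := rfl

noncomputable def teq : {u // u ∈ (glue P Q m).T} ≃ {y // y ∈ Q.T} := by
  refine Equiv.ofBijective (teqFun m) ⟨fun u v h => ?_, fun y => ?_⟩
  · have hu := teqFun_spec m u
    have hv := teqFun_spec m v
    rw [h] at hu
    exact Subtype.ext (glueQOf_inj m hu hv)
  · by_cases h : y.val ∈ Q.S
    · have hmem : Sum.inl (m.g.symm ⟨y.val, h⟩).val ∈ (glue P Q m).T := by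
        refine (mem_glue_T m).mpr ⟨y.val, ?_, y.2⟩
        rw [glueQOf_inl_mem m (m.g.symm ⟨y.val, h⟩).2, Subtype.coe_eta,
          m.g.apply_symm_apply]
      refine ⟨⟨_, hmem⟩, ?_⟩
      have h1 := teqFun_spec m ⟨_, hmem⟩
      rw [glueQOf_inl_mem m (m.g.symm ⟨y.val, h⟩).2, Subtype.coe_eta,
        m.g.apply_symm_apply] at h1
      exact Subtype.ext (Option.some.inj h1).symm
    · have hmem : Sum.inr (⟨y.val, h⟩ : {y : Q.carrier // y ∉ Q.S}) ∈ (glue P Q m).T :=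
        (mem_glue_T m).mpr ⟨y.val, rfl, y.2⟩
      refine ⟨⟨_, hmem⟩, ?_⟩
      have h1 := teqFun_spec m ⟨_, hmem⟩
      rw [glueQOf_inr] at h1
      exact Subtype.ext (Option.some.inj h1).symm

lemma teq_spec (u : {u // u ∈ (glue P Q m).T}) :
    glueQOf P Q m u.val = some (teq m u).val := teqFun_spec m u

lemma teq_inl {x : P.carrier} (h : Sum.inl x ∈ (glue P Q m).T) (hx : x ∈ P.T) :
    (teq m ⟨Sum.inl x, h⟩).val = (m.g ⟨x, hx⟩).val := by
  have h1 := teq_spec m ⟨Sum.inl x, h⟩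
  rw [glueQOf_inl_mem m hx] at h1
  exact (Option.some.inj h1).symm

lemma teq_inr (y : {y : Q.carrier // y ∉ Q.S}) (h : Sum.inr y ∈ (glue P Q m).T) :
    (teq m ⟨Sum.inr y, h⟩).val = y.val := by
  have h1 := teq_spec m ⟨Sum.inr y, h⟩
  rw [glueQOf_inr] at h1
  exact (Option.some.inj h1).symm

noncomputable def seq : {u // u ∈ (glue P Q m).S} ≃ {x // x ∈ P.S} := by
  refine Equiv.ofBijective
    (fun u => ⟨((mem_glue_S m).mp u.2).choose, ((mem_glue_S m).mp u.2).choose_spec.2⟩)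
    ⟨fun u v h => ?_, fun x => ?_⟩
  · have hu := ((mem_glue_S m).mp u.2).choose_spec.1
    have hv := ((mem_glue_S m).mp v.2).choose_spec.1
    rw [Subtype.mk.injEq] at h
    rw [gluePOf_eq_some m] at hu hv
    exact Subtype.ext (hu.trans (h ▸ hv.symm))
  · refine ⟨⟨Sum.inl x.val, (mem_glue_S m).mpr ⟨x.val, rfl, x.2⟩⟩, ?_⟩
    have h1 := ((mem_glue_S m).mp (⟨Sum.inl x.val,
      (mem_glue_S m).mpr ⟨x.val, rfl, x.2⟩⟩ : {u // u ∈ (glue P Q m).S}).2).choose_spec.1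
    rw [gluePOf_eq_some m] at h1
    exact Subtype.ext (Sum.inl.inj h1.symm)

lemma seq_spec (u : {u // u ∈ (glue P Q m).S}) :
    gluePOf P Q u.val = some (seq m u).val :=
  ((mem_glue_S m).mp u.2).choose_spec.1

lemma seq_spec' (u : {u // u ∈ (glue P Q m).S}) :
    u.val = Sum.inl (seq m u).val := (gluePOf_eq_some m).mp (seq_spec m u)

lemma seq_symm_val (x : {x // x ∈ P.S}) :
    ((seq m).symm x).val = Sum.inl x.val := by
  have := seq_spec' m ((seq m).symm x)
  rwa [Equiv.apply_symm_apply] at this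

end PreIpomset

end HDA
namespace HDA

open PreIpomset PAutomaton

variable {σ : Type}

namespace PreIpomset

variable {P Q : PreIpomset σ} (m : Matching P Q)

lemma glue_good (hP : Good P) (hQ : Good Q) : Good (glue P Q m) := by
  constructor
  · rintro u hu v hv
    obtain ⟨x, hx, hxS⟩ := (mem_glue_S m).mp hu
    rw [gluePOf_eq_some m] at hx
    subst hx
    cases v with
    | inl x' =>
      rcases (glue_lt_inl_inl m x' x).mp hv with h | ⟨hx', hx'', h⟩
      · exact hP.1 x hxS x' h
      · exact hQ.1 _ (g_mem_S m ⟨x, hx''⟩) _ h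
    | inr y =>
      obtain ⟨hx, h⟩ := (glue_lt_inr_inl m y x).mp hv
      exact hQ.1 _ (g_mem_S m ⟨x, hx⟩) _ h
  · rintro u hu v hv
    obtain ⟨y, hy, hyT⟩ := (mem_glue_T m).mp hu
    cases u with
    | inl x =>
      by_cases hx : x ∈ P.T
      · rw [glueQOf_inl_mem m hx] at hy
        obtain rfl : (m.g ⟨x, hx⟩).val = y := Option.some.inj hy
        cases v with
        | inl x' =>
          rcases (glue_lt_inl_inl m x x').mp hv with h | ⟨hx1, hx2, h⟩
          · exact hP.2 x hx x' h
          · exact hQ.2 _ hyT _ (by convert h using 3)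
        | inr y' =>
          rcases (glue_lt_inl_inr m x y').mp hv with ⟨hx1, h⟩ | h
          · exact hQ.2 _ hyT _ (by convert h using 3)
          · exact h hx
      · simp [glueQOf, hx] at hy
    | inr y0 =>
      rw [glueQOf_inr] at hy
      obtain rfl : y0.val = y := Option.some.inj hy
      cases v with
      | inl x' =>
        obtain ⟨hx', h⟩ := (glue_lt_inr_inl m y0 x').mp hv
        exact hQ.2 _ hyT _ h
      | inr y' =>
        exact hQ.2 _ hyT _ ((glue_lt_inr_inr m y0 y').mp hv)

lemma glue_evord_teq (u u' : {u // u ∈ (glue P Q m).T}) :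
    (glue P Q m).evord u.val u'.val ↔ Q.evord (teq m u).val (teq m u').val := by
  obtain ⟨u, hu⟩ := u
  obtain ⟨u', hu'⟩ := u'
  cases u with
  | inl x =>
    obtain ⟨hx, -⟩ := (glue_T_inl m x).mp hu
    rw [teq_inl m hu hx]
    cases u' with
    | inl x' =>
      obtain ⟨hx', -⟩ := (glue_T_inl m x').mp hu'
      rw [teq_inl m hu' hx']
      rw [glue_evord_inl_inl]
      constructor
      · rintro (h | ⟨h1, h2, h⟩)
        · exact (m.evord_iff ⟨x, hx⟩ ⟨x', hx'⟩).mp h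
        · convert h using 3
      · intro h
        exact Or.inl ((m.evord_iff ⟨x, hx⟩ ⟨x', hx'⟩).mpr h)
    | inr y' =>
      rw [teq_inr m y' hu', glue_evord_inl_inr]
      exact ⟨fun ⟨h1, h⟩ => by convert h using 3, fun h => ⟨hx, h⟩⟩
  | inr y =>
    rw [teq_inr m y hu]
    cases u' with
    | inl x' =>
      obtain ⟨hx', -⟩ := (glue_T_inl m x').mp hu'
      rw [teq_inl m hu' hx', glue_evord_inr_inl]
      exact ⟨fun ⟨h1, h⟩ => by convert h using 3, fun h => ⟨hx', h⟩⟩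
    | inr y' =>
      rw [teq_inr m y' hu', glue_evord_inr_inr]

lemma glue_lab_teq (u : {u // u ∈ (glue P Q m).T}) :
    Q.lab (teq m u).val = (glue P Q m).lab u.val := by
  obtain ⟨u, hu⟩ := u
  cases u with
  | inl x =>
    obtain ⟨hx, -⟩ := (glue_T_inl m x).mp hu
    rw [teq_inl m hu hx]
    exact m.lab_eq ⟨x, hx⟩
  | inr y => rw [teq_inr m y hu]; rfl

lemma glue_evord_seq (u u' : {u // u ∈ (glue P Q m).S}) :
    (glue P Q m).evord u.val u'.val ↔ P.evord (seq m u).val (seq m u').val := by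
  rw [seq_spec' m u, seq_spec' m u', glue_evord_inl_inl]
  constructor
  · rintro (h | ⟨h1, h2, h⟩)
    · exact h
    · exact (m.evord_iff _ _).mpr h
  · intro h; exact Or.inl h

lemma glue_lab_seq (u : {u // u ∈ (glue P Q m).S}) :
    (glue P Q m).lab u.val = P.lab (seq m u).val := by
  conv_lhs => rw [seq_spec' m u]
  rfl

lemma glue_tgtIface (hP : Good P) (hQ : Good Q) :
    Iso (glue P Q m).tgtIface Q.tgtIface := by
  refine ⟨teq m, fun u u' => ?_, fun u u' => glue_evord_teq m u u',
    fun u => Iff.rfl, fun u => Iff.rfl, fun u => glue_lab_teq m u⟩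
  show (glue P Q m).lt u.val u'.val ↔ Q.lt (teq m u).val (teq m u').val
  exact iff_of_false (fun h => (glue_good m hP hQ).2 u.val u.2 u'.val h)
    (fun h => hQ.2 _ (teq m u).2 _ h)

lemma glue_srcIface (hP : Good P) (hQ : Good Q) :
    Iso (glue P Q m).srcIface P.srcIface := by
  refine ⟨seq m, fun u u' => ?_, fun u u' => glue_evord_seq m u u',
    fun u => Iff.rfl, fun u => Iff.rfl, fun u => (glue_lab_seq m u).symm⟩
  show (glue P Q m).lt u.val u'.val ↔ P.lt (seq m u).val (seq m u').val
  exact iff_of_false (fun h => (glue_good m hP hQ).1 u'.val u'.2 u.val h)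
    (fun h => hP.1 _ (seq m u').2 _ h)

lemma idOf_tgtIface {U : PreIpomset σ} (hS : U.S = ∅) (hT : U.T = ∅) :
    Iso U.idOf.tgtIface U := by
  refine ⟨Equiv.subtypeUnivEquiv fun x => Set.mem_univ x,
    fun x y => Iff.rfl, fun x y => Iff.rfl, fun x => ?_, fun x => ?_, fun x => rfl⟩
  · simp [tgtIface, restrict, hS, Equiv.subtypeUnivEquiv]; exact fun h => h
  · simp [tgtIface, restrict, hT, Equiv.subtypeUnivEquiv]; exact fun h => h

lemma idOf_srcIface {U : PreIpomset σ} (hS : U.S = ∅) (hT : U.T = ∅) :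
    Iso U.idOf.srcIface U := by
  refine ⟨Equiv.subtypeUnivEquiv fun x => Set.mem_univ x,
    fun x y => Iff.rfl, fun x y => Iff.rfl, fun x => ?_, fun x => ?_, fun x => rfl⟩
  · simp [srcIface, restrict, hS, Equiv.subtypeUnivEquiv]; exact fun h => h
  · simp [srcIface, restrict, hT, Equiv.subtypeUnivEquiv]; exact fun h => h

lemma iso_tgtIface {P P' : PreIpomset σ} (h : Iso P P') :
    Iso P.tgtIface P'.tgtIface := by
  obtain ⟨f, h1, h2, h3, h4, h5⟩ := h
  refine ⟨Equiv.subtypeEquiv f h4, fun x y => ?_, fun x y => ?_,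
    fun x => Iff.rfl, fun x => Iff.rfl, fun x => ?_⟩
  · exact h1 x.val y.val
  · exact h2 x.val y.val
  · exact h5 x.val

lemma iso_srcIface {P P' : PreIpomset σ} (h : Iso P P') :
    Iso P.srcIface P'.srcIface := by
  obtain ⟨f, h1, h2, h3, h4, h5⟩ := h
  refine ⟨Equiv.subtypeEquiv f h3, fun x y => ?_, fun x y => ?_,
    fun x => Iff.rfl, fun x => Iff.rfl, fun x => ?_⟩
  · exact h1 x.val y.val
  · exact h2 x.val y.val
  · exact h5 x.val

lemma matching_iface (m' : Matching P Q) (hP : Good P) (hQ : Good Q) :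
    Iso P.tgtIface Q.srcIface := by
  refine ⟨m'.g, fun x y => ?_, fun x y => m'.evord_iff x y,
    fun x => Iff.rfl, fun x => Iff.rfl, fun x => m'.lab_eq x⟩
  exact iff_of_false (fun h => hP.2 x.val x.2 y.val h)
    (fun h => hQ.1 _ (m'.g y).2 _ h)

end PreIpomset

end HDA
namespace HDA

open PreIpomset PAutomaton

variable {σ : Type}

namespace PreIpomset

lemma glueRel_congr {P P' Q Q' R R' : PreIpomset σ}
    (iP : Iso P P') (iQ : Iso Q Q') (iR : Iso R R') :
    GlueRel P Q R → GlueRel P' Q' R' := by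
  rintro ⟨m, hIso⟩
  obtain ⟨f, f1, f2, f3, f4, f5⟩ := iP
  obtain ⟨g, g1, g2, g3, g4, g5⟩ := iQ
  set gT : {x // x ∈ P.T} ≃ {x // x ∈ P'.T} := Equiv.subtypeEquiv f f4 with hgT
  set gS : {y // y ∈ Q.S} ≃ {y // y ∈ Q'.S} := Equiv.subtypeEquiv g g3 with hgS
  have hsymm : ∀ (x : P.carrier) (hx : x ∈ P.T) (hx' : f x ∈ P'.T),
      gT.symm ⟨f x, hx'⟩ = ⟨x, hx⟩ := by
    intro x hx hx'
    apply Subtype.ext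
    simp [hgT, Equiv.subtypeEquiv_symm, Equiv.subtypeEquiv_apply]
  have hev : ∀ x y : {x // x ∈ P'.T}, P'.evord x.val y.val ↔
      Q'.evord ((gT.symm.trans (m.g.trans gS)) x).val
        ((gT.symm.trans (m.g.trans gS)) y).val := by
    intro x y
    calc P'.evord x.val y.val
        ↔ P.evord (gT.symm x).val (gT.symm y).val := by
          rw [f2]
          simp [hgT, Equiv.subtypeEquiv_symm, Equiv.subtypeEquiv_apply,
            f.apply_symm_apply]
      _ ↔ Q.evord (m.g (gT.symm x)).val (m.g (gT.symm y)).val :=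
          m.evord_iff _ _
      _ ↔ Q'.evord (gS (m.g (gT.symm x))).val (gS (m.g (gT.symm y))).val := by
          rw [g2]; simp [hgS, Equiv.subtypeEquiv_apply]
  have hlab : ∀ x : {x // x ∈ P'.T},
      Q'.lab ((gT.symm.trans (m.g.trans gS)) x).val = P'.lab x.val := by
    intro x
    calc Q'.lab ((gT.symm.trans (m.g.trans gS)) x).val
        = Q.lab (m.g (gT.symm x)).val := by
          simp [hgS, Equiv.trans_apply, Equiv.subtypeEquiv_apply, g5]
      _ = P.lab (gT.symm x).val := m.lab_eq _
      _ = P'.lab x.val := by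
          simp [hgT, Equiv.subtypeEquiv_symm, Equiv.subtypeEquiv_apply]
          rw [← f5 (f.symm x.val), f.apply_symm_apply]
  refine ⟨⟨gT.symm.trans (m.g.trans gS), hev, hlab⟩, ?_⟩
  set m' : Matching P' Q' := ⟨gT.symm.trans (m.g.trans gS), hev, hlab⟩ with hm'
  have hval : ∀ (x : P.carrier) (hx : x ∈ P.T) (hx' : f x ∈ P'.T),
      (m'.g ⟨f x, hx'⟩).val = g (m.g ⟨x, hx⟩).val := by
    intro x hx hx'
    show (gS (m.g (gT.symm ⟨f x, hx'⟩))).val = _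
    rw [hsymm x hx hx']
    rfl
  have hmemT : ∀ x : P.carrier, x ∈ P.T ↔ f x ∈ P'.T := f4
  suffices hGlue : Iso (glue P Q m) (glue P' Q' m') by
    exact isoTrans (isoSymm hGlue) (isoTrans hIso iR)
  set E : (glue P Q m).carrier ≃ (glue P' Q' m').carrier :=
    Equiv.sumCongr f (Equiv.subtypeEquiv g (fun y => not_congr (g3 y))) with hE
  have hEinl : ∀ x : P.carrier, E (Sum.inl x) = Sum.inl (f x) := fun x => rfl
  have hEinr : ∀ y : {y : Q.carrier // y ∉ Q.S},
      E (Sum.inr y) = Sum.inr ⟨g y.val, fun h => y.2 ((g3 y.val).mpr h)⟩ := fun y => rfl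
  refine ⟨E, ?_, ?_, ?_, ?_, ?_⟩
  · rintro (x | y) (x' | y')
    · rw [hEinl, hEinl, glue_lt_inl_inl, glue_lt_inl_inl]
      constructor
      · rintro (h | ⟨hx, hx', h⟩)
        · exact Or.inl ((f1 _ _).mp h)
        · refine Or.inr ⟨(f4 x).mp hx, (f4 x').mp hx', ?_⟩
          rw [hval x hx, hval x' hx']
          exact (g1 _ _).mp h
      · rintro (h | ⟨hx, hx', h⟩)
        · exact Or.inl ((f1 _ _).mpr h)
        · have hx0 := (f4 x).mpr hx
          have hx0' := (f4 x').mpr hx'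
          refine Or.inr ⟨hx0, hx0', (g1 _ _).mpr ?_⟩
          rw [← hval x hx0 hx, ← hval x' hx0' hx']
          exact h
    · rw [hEinl, hEinr, glue_lt_inl_inr, glue_lt_inl_inr]
      constructor
      · rintro (⟨hx, h⟩ | h)
        · exact Or.inl ⟨(f4 x).mp hx, by rw [hval x hx]; exact (g1 _ _).mp h⟩
        · exact Or.inr (fun h' => h ((f4 x).mpr h'))
      · rintro (⟨hx, h⟩ | h)
        · have hx0 := (f4 x).mpr hx
          exact Or.inl ⟨hx0, (g1 _ _).mpr (by rw [← hval x hx0 hx]; exact h)⟩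
        · exact Or.inr (fun h' => h ((f4 x).mp h'))
    · rw [hEinr, hEinl, glue_lt_inr_inl, glue_lt_inr_inl]
      constructor
      · rintro ⟨hx, h⟩
        exact ⟨(f4 x').mp hx, by rw [hval x' hx]; exact (g1 _ _).mp h⟩
      · rintro ⟨hx, h⟩
        have hx0 := (f4 x').mpr hx
        exact ⟨hx0, (g1 _ _).mpr (by rw [← hval x' hx0 hx]; exact h)⟩
    · rw [hEinr, hEinr, glue_lt_inr_inr, glue_lt_inr_inr]
      exact g1 _ _
  · rintro (x | y) (x' | y')
    · rw [hEinl, hEinl, glue_evord_inl_inl, glue_evord_inl_inl]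
      constructor
      · rintro (h | ⟨hx, hx', h⟩)
        · exact Or.inl ((f2 _ _).mp h)
        · refine Or.inr ⟨(f4 x).mp hx, (f4 x').mp hx', ?_⟩
          rw [hval x hx, hval x' hx']
          exact (g2 _ _).mp h
      · rintro (h | ⟨hx, hx', h⟩)
        · exact Or.inl ((f2 _ _).mpr h)
        · have hx0 := (f4 x).mpr hx
          have hx0' := (f4 x').mpr hx'
          refine Or.inr ⟨hx0, hx0', (g2 _ _).mpr ?_⟩
          rw [← hval x hx0 hx, ← hval x' hx0' hx']
          exact h
    · rw [hEinl, hEinr, glue_evord_inl_inr, glue_evord_inl_inr]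
      constructor
      · rintro ⟨hx, h⟩
        exact ⟨(f4 x).mp hx, by rw [hval x hx]; exact (g2 _ _).mp h⟩
      · rintro ⟨hx, h⟩
        have hx0 := (f4 x).mpr hx
        exact ⟨hx0, (g2 _ _).mpr (by rw [← hval x hx0 hx]; exact h)⟩
    · rw [hEinr, hEinl, glue_evord_inr_inl, glue_evord_inr_inl]
      constructor
      · rintro ⟨hx, h⟩
        exact ⟨(f4 x').mp hx, by rw [hval x' hx]; exact (g2 _ _).mp h⟩
      · rintro ⟨hx, h⟩
        have hx0 := (f4 x').mpr hx
        exact ⟨hx0, (g2 _ _).mpr (by rw [← hval x' hx0 hx]; exact h)⟩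
    · rw [hEinr, hEinr, glue_evord_inr_inr, glue_evord_inr_inr]
      exact g2 _ _
  · rintro (x | y)
    · erw [hEinl, glue_S_inl, glue_S_inl]
      exact f3 x
    · rw [hEinr]
      exact iff_of_false (glue_S_inr m y) (glue_S_inr m' _)
  · rintro (x | y)
    · erw [hEinl, glue_T_inl, glue_T_inl]
      constructor
      · rintro ⟨hx, h⟩
        exact ⟨(f4 x).mp hx, by rw [hval x hx]; exact (g4 _).mp h⟩
      · rintro ⟨hx, h⟩
        have hx0 := (f4 x).mpr hx
        exact ⟨hx0, (g4 _).mpr (by rw [← hval x hx0 hx]; exact h)⟩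
    · erw [hEinr, glue_T_inr, glue_T_inr]
      exact g4 y.val
  · rintro (x | y)
    · rw [hEinl]
      exact f5 x
    · rw [hEinr]
      exact g5 y.val

end PreIpomset

end HDA
namespace HDA

open PreIpomset PAutomaton

variable {σ : Type}

namespace PreIpomset

lemma Matching.ext' {P Q : PreIpomset σ} {m m' : Matching P Q} (h : m.g = m'.g) :
    m = m' := by
  cases m; cases m'
  simp only at h
  subst h
  rfl

variable {U V W : PreIpomset σ} (m1 : Matching U V) (m2 : Matching V W)

/-- The matching `T_{U*V} ≅ S_W` induced by `m2 : T_V ≅ S_W`. -/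
noncomputable def mRight : Matching (glue U V m1) W := by
  refine ⟨(teq m1).trans m2.g, fun u u' => ?_, fun u => ?_⟩
  · exact (glue_evord_teq m1 u u').trans (m2.evord_iff _ _)
  · exact (m2.lab_eq (teq m1 u)).trans (glue_lab_teq m1 u)

/-- The matching `T_U ≅ S_{V*W}` induced by `m1 : T_U ≅ S_V`. -/
noncomputable def mLeft : Matching U (glue V W m2) := by
  refine ⟨m1.g.trans (seq m2).symm, fun x y => ?_, fun x => ?_⟩
  · refine (m1.evord_iff x y).trans ?_
    have h := glue_evord_seq m2 ((seq m2).symm (m1.g x)) ((seq m2).symm (m1.g y))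
    rw [Equiv.apply_symm_apply, Equiv.apply_symm_apply] at h
    exact h.symm
  · have h := glue_lab_seq m2 ((seq m2).symm (m1.g x))
    rw [Equiv.apply_symm_apply] at h
    rw [Equiv.trans_apply, h]
    exact m1.lab_eq x

noncomputable def extractVW (mR : Matching (glue U V m1) W) : Matching V W := by
  refine ⟨(teq m1).symm.trans mR.g, fun y y' => ?_, fun y => ?_⟩
  · have h := glue_evord_teq m1 ((teq m1).symm y) ((teq m1).symm y')
    rw [Equiv.apply_symm_apply, Equiv.apply_symm_apply] at h
    exact h.symm.trans (mR.evord_iff _ _)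
  · have h := glue_lab_teq m1 ((teq m1).symm y)
    rw [Equiv.apply_symm_apply] at h
    exact (mR.lab_eq ((teq m1).symm y)).trans h.symm

noncomputable def extractUV (mL : Matching U (glue V W m2)) : Matching U V := by
  refine ⟨mL.g.trans (seq m2), fun x y => ?_, fun x => ?_⟩
  · exact (mL.evord_iff x y).trans (glue_evord_seq m2 (mL.g x) (mL.g y))
  · exact (glue_lab_seq m2 (mL.g x)).symm.trans (mL.lab_eq x)

lemma mRight_extract (mR : Matching (glue U V m1) W) :
    mRight m1 (extractVW m1 mR) = mR := by
  apply Matching.ext'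
  show (teq m1).trans ((teq m1).symm.trans mR.g) = mR.g
  ext u
  simp

lemma mLeft_extract (mL : Matching U (glue V W m2)) :
    mLeft (extractUV m2 mL) m2 = mL := by
  apply Matching.ext'
  show (mL.g.trans (seq m2)).trans (seq m2).symm = mL.g
  ext u
  simp

end PreIpomset

end HDA
namespace HDA

open PreIpomset PAutomaton

variable {σ : Type}

namespace PreIpomset

variable {U V W : PreIpomset σ} (m1 : Matching U V) (m2 : Matching V W)

lemma mRight_g_inl {a : U.carrier} (h : Sum.inl a ∈ (glue U V m1).T) (ha : a ∈ U.T)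
    (hva : (m1.g ⟨a, ha⟩).val ∈ V.T) :
    ((mRight m1 m2).g ⟨Sum.inl a, h⟩).val = (m2.g ⟨(m1.g ⟨a, ha⟩).val, hva⟩).val := by
  show (m2.g (teq m1 ⟨Sum.inl a, h⟩)).val = _
  have he : teq m1 ⟨Sum.inl a, h⟩ = ⟨(m1.g ⟨a, ha⟩).val, hva⟩ :=
    Subtype.ext (teq_inl m1 h ha)
  rw [he]

lemma mRight_g_inr {b : {y : V.carrier // y ∉ V.S}} (h : Sum.inr b ∈ (glue U V m1).T)
    (hb : b.val ∈ V.T) :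
    ((mRight m1 m2).g ⟨Sum.inr b, h⟩).val = (m2.g ⟨b.val, hb⟩).val := by
  show (m2.g (teq m1 ⟨Sum.inr b, h⟩)).val = _
  have he : teq m1 ⟨Sum.inr b, h⟩ = ⟨b.val, hb⟩ := Subtype.ext (teq_inr m1 b h)
  rw [he]

lemma mLeft_g (x : {a // a ∈ U.T}) :
    ((mLeft m1 m2).g x).val = Sum.inl (m1.g x).val := seq_symm_val m2 (m1.g x)

noncomputable def assocEquiv :
    (glue (glue U V m1) W (mRight m1 m2)).carrier ≃
      (glue U (glue V W m2) (mLeft m1 m2)).carrier where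
  toFun u := match u with
    | Sum.inl (Sum.inl a) => Sum.inl a
    | Sum.inl (Sum.inr b) =>
        Sum.inr ⟨Sum.inl b.val, fun h => b.2 ((glue_S_inl m2 b.val).mp h)⟩
    | Sum.inr c => Sum.inr ⟨Sum.inr c, glue_S_inr m2 c⟩
  invFun u := match u with
    | Sum.inl a => Sum.inl (Sum.inl a)
    | Sum.inr ⟨Sum.inl y, h⟩ =>
        Sum.inl (Sum.inr ⟨y, fun hy => h ((glue_S_inl m2 y).mpr hy)⟩)
    | Sum.inr ⟨Sum.inr c, _⟩ => Sum.inr c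
  left_inv := by rintro ((a | b) | c) <;> rfl
  right_inv := by rintro (a | ⟨y | c, h⟩) <;> rfl

lemma glue_assoc_iso :
    Iso (glue (glue U V m1) W (mRight m1 m2)) (glue U (glue V W m2) (mLeft m1 m2)) := by
  refine ⟨assocEquiv m1 m2, ?_, ?_, ?_, ?_, ?_⟩
  · -- lt
    rintro ((a | b) | c) ((a' | b') | c')
    · show _ ↔ (glue U (glue V W m2) (mLeft m1 m2)).lt (Sum.inl a) (Sum.inl a')
      erw [glue_lt_inl_inl (mRight m1 m2), glue_lt_inl_inl m1,
        glue_lt_inl_inl (mLeft m1 m2)]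
      constructor
      · rintro ((h | ⟨ha, ha', h⟩) | ⟨h, h', hw⟩)
        · exact Or.inl h
        · refine Or.inr ⟨ha, ha', ?_⟩
          rw [mLeft_g, mLeft_g]
          exact (glue_lt_inl_inl m2 _ _).mpr (Or.inl h)
        · obtain ⟨ha, hva⟩ := (glue_T_inl m1 a).mp h
          obtain ⟨ha', hva'⟩ := (glue_T_inl m1 a').mp h'
          rw [mRight_g_inl m1 m2 h ha hva, mRight_g_inl m1 m2 h' ha' hva'] at hw
          refine Or.inr ⟨ha, ha', ?_⟩
          rw [mLeft_g, mLeft_g]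
          exact (glue_lt_inl_inl m2 _ _).mpr (Or.inr ⟨hva, hva', hw⟩)
      · rintro (h | ⟨ha, ha', h⟩)
        · exact Or.inl (Or.inl h)
        · rw [mLeft_g, mLeft_g] at h
          rcases (glue_lt_inl_inl m2 _ _).mp h with h | ⟨hva, hva', hw⟩
          · exact Or.inl (Or.inr ⟨ha, ha', h⟩)
          · have hT := (glue_T_inl m1 a).mpr ⟨ha, hva⟩
            have hT' := (glue_T_inl m1 a').mpr ⟨ha', hva'⟩
            refine Or.inr ⟨hT, hT', ?_⟩
            rw [mRight_g_inl m1 m2 hT ha hva, mRight_g_inl m1 m2 hT' ha' hva']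
            exact hw
    · show _ ↔ (glue U (glue V W m2) (mLeft m1 m2)).lt (Sum.inl a) (Sum.inr _)
      erw [glue_lt_inl_inl (mRight m1 m2), glue_lt_inl_inr m1,
        glue_lt_inl_inr (mLeft m1 m2)]
      constructor
      · rintro ((⟨ha, h⟩ | h) | ⟨h, h', hw⟩)
        · refine Or.inl ⟨ha, ?_⟩
          rw [mLeft_g]
          exact (glue_lt_inl_inl m2 _ _).mpr (Or.inl h)
        · exact Or.inr h
        · obtain ⟨ha, hva⟩ := (glue_T_inl m1 a).mp h
          have hb' := (glue_T_inr m1 b').mp h'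
          rw [mRight_g_inl m1 m2 h ha hva, mRight_g_inr m1 m2 h' hb'] at hw
          refine Or.inl ⟨ha, ?_⟩
          rw [mLeft_g]
          exact (glue_lt_inl_inl m2 _ _).mpr (Or.inr ⟨hva, hb', hw⟩)
      · rintro (⟨ha, h⟩ | h)
        · rw [mLeft_g] at h
          rcases (glue_lt_inl_inl m2 _ _).mp h with h | ⟨hva, hb', hw⟩
          · exact Or.inl (Or.inl ⟨ha, h⟩)
          · have hT := (glue_T_inl m1 a).mpr ⟨ha, hva⟩
            have hT' := (glue_T_inr m1 b').mpr hb'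
            refine Or.inr ⟨hT, hT', ?_⟩
            rw [mRight_g_inl m1 m2 hT ha hva, mRight_g_inr m1 m2 hT' hb']
            exact hw
        · exact Or.inl (Or.inr h)
    · show _ ↔ (glue U (glue V W m2) (mLeft m1 m2)).lt (Sum.inl a) (Sum.inr _)
      erw [glue_lt_inl_inr (mRight m1 m2), glue_lt_inl_inr (mLeft m1 m2)]
      constructor
      · rintro (⟨h, hw⟩ | h)
        · obtain ⟨ha, hva⟩ := (glue_T_inl m1 a).mp h
          rw [mRight_g_inl m1 m2 h ha hva] at hw
          refine Or.inl ⟨ha, ?_⟩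
          rw [mLeft_g]
          exact (glue_lt_inl_inr m2 _ _).mpr (Or.inl ⟨hva, hw⟩)
        · by_cases ha : a ∈ U.T
          · refine Or.inl ⟨ha, ?_⟩
            rw [mLeft_g]
            refine (glue_lt_inl_inr m2 _ _).mpr (Or.inr fun hva => ?_)
            exact h ((glue_T_inl m1 a).mpr ⟨ha, hva⟩)
          · exact Or.inr ha
      · rintro (⟨ha, h⟩ | h)
        · rw [mLeft_g] at h
          rcases (glue_lt_inl_inr m2 _ _).mp h with ⟨hva, hw⟩ | hva
          · have hT := (glue_T_inl m1 a).mpr ⟨ha, hva⟩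
            refine Or.inl ⟨hT, ?_⟩
            rw [mRight_g_inl m1 m2 hT ha hva]
            exact hw
          · refine Or.inr fun hT => ?_
            obtain ⟨ha', hva'⟩ := (glue_T_inl m1 a).mp hT
            exact hva hva'
        · exact Or.inr fun hT => h ((glue_T_inl m1 a).mp hT).1
    · show _ ↔ (glue U (glue V W m2) (mLeft m1 m2)).lt (Sum.inr _) (Sum.inl a')
      erw [glue_lt_inl_inl (mRight m1 m2), glue_lt_inr_inl m1,
        glue_lt_inr_inl (mLeft m1 m2)]
      constructor
      · rintro (⟨ha', h⟩ | ⟨h, h', hw⟩)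
        · refine ⟨ha', ?_⟩
          rw [mLeft_g]
          exact (glue_lt_inl_inl m2 _ _).mpr (Or.inl h)
        · have hb := (glue_T_inr m1 b).mp h
          obtain ⟨ha', hva'⟩ := (glue_T_inl m1 a').mp h'
          rw [mRight_g_inr m1 m2 h hb, mRight_g_inl m1 m2 h' ha' hva'] at hw
          refine ⟨ha', ?_⟩
          rw [mLeft_g]
          exact (glue_lt_inl_inl m2 _ _).mpr (Or.inr ⟨hb, hva', hw⟩)
      · rintro ⟨ha', h⟩
        rw [mLeft_g] at h
        rcases (glue_lt_inl_inl m2 _ _).mp h with h | ⟨hb, hva', hw⟩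
        · exact Or.inl ⟨ha', h⟩
        · have hT := (glue_T_inr m1 b).mpr hb
          have hT' := (glue_T_inl m1 a').mpr ⟨ha', hva'⟩
          refine Or.inr ⟨hT, hT', ?_⟩
          rw [mRight_g_inr m1 m2 hT hb, mRight_g_inl m1 m2 hT' ha' hva']
          exact hw
    · show _ ↔ (glue U (glue V W m2) (mLeft m1 m2)).lt (Sum.inr _) (Sum.inr _)
      erw [glue_lt_inl_inl (mRight m1 m2), glue_lt_inr_inr m1,
        glue_lt_inr_inr (mLeft m1 m2), glue_lt_inl_inl m2]
      constructor
      · rintro (h | ⟨h, h', hw⟩)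
        · exact Or.inl h
        · have hb := (glue_T_inr m1 b).mp h
          have hb' := (glue_T_inr m1 b').mp h'
          rw [mRight_g_inr m1 m2 h hb, mRight_g_inr m1 m2 h' hb'] at hw
          exact Or.inr ⟨hb, hb', hw⟩
      · rintro (h | ⟨hb, hb', hw⟩)
        · exact Or.inl h
        · have hT := (glue_T_inr m1 b).mpr hb
          have hT' := (glue_T_inr m1 b').mpr hb'
          refine Or.inr ⟨hT, hT', ?_⟩
          rw [mRight_g_inr m1 m2 hT hb, mRight_g_inr m1 m2 hT' hb']
          exact hw
    · show _ ↔ (glue U (glue V W m2) (mLeft m1 m2)).lt (Sum.inr _) (Sum.inr _)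
      erw [glue_lt_inl_inr (mRight m1 m2), glue_lt_inr_inr (mLeft m1 m2),
        glue_lt_inl_inr m2]
      constructor
      · rintro (⟨h, hw⟩ | h)
        · have hb := (glue_T_inr m1 b).mp h
          rw [mRight_g_inr m1 m2 h hb] at hw
          exact Or.inl ⟨hb, hw⟩
        · exact Or.inr fun hb => h ((glue_T_inr m1 b).mpr hb)
      · rintro (⟨hb, hw⟩ | h)
        · have hT := (glue_T_inr m1 b).mpr hb
          refine Or.inl ⟨hT, ?_⟩
          rw [mRight_g_inr m1 m2 hT hb]
          exact hw
        · exact Or.inr fun hT => h ((glue_T_inr m1 b).mp hT)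
    · show _ ↔ (glue U (glue V W m2) (mLeft m1 m2)).lt (Sum.inr _) (Sum.inl a')
      erw [glue_lt_inr_inl (mRight m1 m2), glue_lt_inr_inl (mLeft m1 m2)]
      constructor
      · rintro ⟨h', hw⟩
        obtain ⟨ha', hva'⟩ := (glue_T_inl m1 a').mp h'
        rw [mRight_g_inl m1 m2 h' ha' hva'] at hw
        refine ⟨ha', ?_⟩
        rw [mLeft_g]
        exact (glue_lt_inr_inl m2 _ _).mpr ⟨hva', hw⟩
      · rintro ⟨ha', h⟩
        rw [mLeft_g] at h
        obtain ⟨hva', hw⟩ := (glue_lt_inr_inl m2 _ _).mp h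
        have hT' := (glue_T_inl m1 a').mpr ⟨ha', hva'⟩
        refine ⟨hT', ?_⟩
        rw [mRight_g_inl m1 m2 hT' ha' hva']
        exact hw
    · show _ ↔ (glue U (glue V W m2) (mLeft m1 m2)).lt (Sum.inr _) (Sum.inr _)
      erw [glue_lt_inr_inl (mRight m1 m2), glue_lt_inr_inr (mLeft m1 m2),
        glue_lt_inr_inl m2]
      constructor
      · rintro ⟨h', hw⟩
        have hb' := (glue_T_inr m1 b').mp h'
        rw [mRight_g_inr m1 m2 h' hb'] at hw
        exact ⟨hb', hw⟩
      · rintro ⟨hb', hw⟩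
        have hT' := (glue_T_inr m1 b').mpr hb'
        refine ⟨hT', ?_⟩
        rw [mRight_g_inr m1 m2 hT' hb']
        exact hw
    · show _ ↔ (glue U (glue V W m2) (mLeft m1 m2)).lt (Sum.inr _) (Sum.inr _)
      erw [glue_lt_inr_inr (mRight m1 m2), glue_lt_inr_inr (mLeft m1 m2),
        glue_lt_inr_inr m2]
  · -- evord
    rintro ((a | b) | c) ((a' | b') | c')
    · show _ ↔ (glue U (glue V W m2) (mLeft m1 m2)).evord (Sum.inl a) (Sum.inl a')
      erw [glue_evord_inl_inl (mRight m1 m2), glue_evord_inl_inl m1,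
        glue_evord_inl_inl (mLeft m1 m2)]
      constructor
      · rintro ((h | ⟨ha, ha', h⟩) | ⟨h, h', hw⟩)
        · exact Or.inl h
        · refine Or.inr ⟨ha, ha', ?_⟩
          rw [mLeft_g, mLeft_g]
          exact (glue_evord_inl_inl m2 _ _).mpr (Or.inl h)
        · obtain ⟨ha, hva⟩ := (glue_T_inl m1 a).mp h
          obtain ⟨ha', hva'⟩ := (glue_T_inl m1 a').mp h'
          rw [mRight_g_inl m1 m2 h ha hva, mRight_g_inl m1 m2 h' ha' hva'] at hw
          refine Or.inr ⟨ha, ha', ?_⟩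
          rw [mLeft_g, mLeft_g]
          exact (glue_evord_inl_inl m2 _ _).mpr (Or.inr ⟨hva, hva', hw⟩)
      · rintro (h | ⟨ha, ha', h⟩)
        · exact Or.inl (Or.inl h)
        · rw [mLeft_g, mLeft_g] at h
          rcases (glue_evord_inl_inl m2 _ _).mp h with h | ⟨hva, hva', hw⟩
          · exact Or.inl (Or.inr ⟨ha, ha', h⟩)
          · have hT := (glue_T_inl m1 a).mpr ⟨ha, hva⟩
            have hT' := (glue_T_inl m1 a').mpr ⟨ha', hva'⟩
            refine Or.inr ⟨hT, hT', ?_⟩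
            rw [mRight_g_inl m1 m2 hT ha hva, mRight_g_inl m1 m2 hT' ha' hva']
            exact hw
    · show _ ↔ (glue U (glue V W m2) (mLeft m1 m2)).evord (Sum.inl a) (Sum.inr _)
      erw [glue_evord_inl_inl (mRight m1 m2), glue_evord_inl_inr m1,
        glue_evord_inl_inr (mLeft m1 m2)]
      constructor
      · rintro (⟨ha, h⟩ | ⟨h, h', hw⟩)
        · refine ⟨ha, ?_⟩
          rw [mLeft_g]
          exact (glue_evord_inl_inl m2 _ _).mpr (Or.inl h)
        · obtain ⟨ha, hva⟩ := (glue_T_inl m1 a).mp h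
          have hb' := (glue_T_inr m1 b').mp h'
          rw [mRight_g_inl m1 m2 h ha hva, mRight_g_inr m1 m2 h' hb'] at hw
          refine ⟨ha, ?_⟩
          rw [mLeft_g]
          exact (glue_evord_inl_inl m2 _ _).mpr (Or.inr ⟨hva, hb', hw⟩)
      · rintro ⟨ha, h⟩
        rw [mLeft_g] at h
        rcases (glue_evord_inl_inl m2 _ _).mp h with h | ⟨hva, hb', hw⟩
        · exact Or.inl ⟨ha, h⟩
        · have hT := (glue_T_inl m1 a).mpr ⟨ha, hva⟩
          have hT' := (glue_T_inr m1 b').mpr hb'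
          refine Or.inr ⟨hT, hT', ?_⟩
          rw [mRight_g_inl m1 m2 hT ha hva, mRight_g_inr m1 m2 hT' hb']
          exact hw
    · show _ ↔ (glue U (glue V W m2) (mLeft m1 m2)).evord (Sum.inl a) (Sum.inr _)
      erw [glue_evord_inl_inr (mRight m1 m2), glue_evord_inl_inr (mLeft m1 m2)]
      constructor
      · rintro ⟨h, hw⟩
        obtain ⟨ha, hva⟩ := (glue_T_inl m1 a).mp h
        rw [mRight_g_inl m1 m2 h ha hva] at hw
        refine ⟨ha, ?_⟩
        rw [mLeft_g]
        exact (glue_evord_inl_inr m2 _ _).mpr ⟨hva, hw⟩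
      · rintro ⟨ha, h⟩
        rw [mLeft_g] at h
        obtain ⟨hva, hw⟩ := (glue_evord_inl_inr m2 _ _).mp h
        have hT := (glue_T_inl m1 a).mpr ⟨ha, hva⟩
        refine ⟨hT, ?_⟩
        rw [mRight_g_inl m1 m2 hT ha hva]
        exact hw
    · show _ ↔ (glue U (glue V W m2) (mLeft m1 m2)).evord (Sum.inr _) (Sum.inl a')
      erw [glue_evord_inl_inl (mRight m1 m2), glue_evord_inr_inl m1,
        glue_evord_inr_inl (mLeft m1 m2)]
      constructor
      · rintro (⟨ha', h⟩ | ⟨h, h', hw⟩)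
        · refine ⟨ha', ?_⟩
          rw [mLeft_g]
          exact (glue_evord_inl_inl m2 _ _).mpr (Or.inl h)
        · have hb := (glue_T_inr m1 b).mp h
          obtain ⟨ha', hva'⟩ := (glue_T_inl m1 a').mp h'
          rw [mRight_g_inr m1 m2 h hb, mRight_g_inl m1 m2 h' ha' hva'] at hw
          refine ⟨ha', ?_⟩
          rw [mLeft_g]
          exact (glue_evord_inl_inl m2 _ _).mpr (Or.inr ⟨hb, hva', hw⟩)
      · rintro ⟨ha', h⟩
        rw [mLeft_g] at h
        rcases (glue_evord_inl_inl m2 _ _).mp h with h | ⟨hb, hva', hw⟩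
        · exact Or.inl ⟨ha', h⟩
        · have hT := (glue_T_inr m1 b).mpr hb
          have hT' := (glue_T_inl m1 a').mpr ⟨ha', hva'⟩
          refine Or.inr ⟨hT, hT', ?_⟩
          rw [mRight_g_inr m1 m2 hT hb, mRight_g_inl m1 m2 hT' ha' hva']
          exact hw
    · show _ ↔ (glue U (glue V W m2) (mLeft m1 m2)).evord (Sum.inr _) (Sum.inr _)
      erw [glue_evord_inl_inl (mRight m1 m2), glue_evord_inr_inr m1,
        glue_evord_inr_inr (mLeft m1 m2), glue_evord_inl_inl m2]
      constructor
      · rintro (h | ⟨h, h', hw⟩)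
        · exact Or.inl h
        · have hb := (glue_T_inr m1 b).mp h
          have hb' := (glue_T_inr m1 b').mp h'
          rw [mRight_g_inr m1 m2 h hb, mRight_g_inr m1 m2 h' hb'] at hw
          exact Or.inr ⟨hb, hb', hw⟩
      · rintro (h | ⟨hb, hb', hw⟩)
        · exact Or.inl h
        · have hT := (glue_T_inr m1 b).mpr hb
          have hT' := (glue_T_inr m1 b').mpr hb'
          refine Or.inr ⟨hT, hT', ?_⟩
          rw [mRight_g_inr m1 m2 hT hb, mRight_g_inr m1 m2 hT' hb']
          exact hw
    · show _ ↔ (glue U (glue V W m2) (mLeft m1 m2)).evord (Sum.inr _) (Sum.inr _)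
      erw [glue_evord_inl_inr (mRight m1 m2), glue_evord_inr_inr (mLeft m1 m2),
        glue_evord_inl_inr m2]
      constructor
      · rintro ⟨h, hw⟩
        have hb := (glue_T_inr m1 b).mp h
        rw [mRight_g_inr m1 m2 h hb] at hw
        exact ⟨hb, hw⟩
      · rintro ⟨hb, hw⟩
        have hT := (glue_T_inr m1 b).mpr hb
        refine ⟨hT, ?_⟩
        rw [mRight_g_inr m1 m2 hT hb]
        exact hw
    · show _ ↔ (glue U (glue V W m2) (mLeft m1 m2)).evord (Sum.inr _) (Sum.inl a')
      erw [glue_evord_inr_inl (mRight m1 m2), glue_evord_inr_inl (mLeft m1 m2)]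
      constructor
      · rintro ⟨h', hw⟩
        obtain ⟨ha', hva'⟩ := (glue_T_inl m1 a').mp h'
        rw [mRight_g_inl m1 m2 h' ha' hva'] at hw
        refine ⟨ha', ?_⟩
        rw [mLeft_g]
        exact (glue_evord_inr_inl m2 _ _).mpr ⟨hva', hw⟩
      · rintro ⟨ha', h⟩
        rw [mLeft_g] at h
        obtain ⟨hva', hw⟩ := (glue_evord_inr_inl m2 _ _).mp h
        have hT' := (glue_T_inl m1 a').mpr ⟨ha', hva'⟩
        refine ⟨hT', ?_⟩
        rw [mRight_g_inl m1 m2 hT' ha' hva']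
        exact hw
    · show _ ↔ (glue U (glue V W m2) (mLeft m1 m2)).evord (Sum.inr _) (Sum.inr _)
      erw [glue_evord_inr_inl (mRight m1 m2), glue_evord_inr_inr (mLeft m1 m2),
        glue_evord_inr_inl m2]
      constructor
      · rintro ⟨h', hw⟩
        have hb' := (glue_T_inr m1 b').mp h'
        rw [mRight_g_inr m1 m2 h' hb'] at hw
        exact ⟨hb', hw⟩
      · rintro ⟨hb', hw⟩
        have hT' := (glue_T_inr m1 b').mpr hb'
        refine ⟨hT', ?_⟩
        rw [mRight_g_inr m1 m2 hT' hb']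
        exact hw
    · show _ ↔ (glue U (glue V W m2) (mLeft m1 m2)).evord (Sum.inr _) (Sum.inr _)
      erw [glue_evord_inr_inr (mRight m1 m2), glue_evord_inr_inr (mLeft m1 m2),
        glue_evord_inr_inr m2]
  · -- S
    rintro ((a | b) | c)
    · show _ ↔ Sum.inl a ∈ (glue U (glue V W m2) (mLeft m1 m2)).S
      erw [glue_S_inl (mRight m1 m2), glue_S_inl m1]
    · show _ ↔ Sum.inr _ ∈ (glue U (glue V W m2) (mLeft m1 m2)).S
      exact iff_of_false
        (fun h => glue_S_inr m1 b ((glue_S_inl (mRight m1 m2) (Sum.inr b)).mp h))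
        (glue_S_inr (mLeft m1 m2) _)
    · show _ ↔ Sum.inr _ ∈ (glue U (glue V W m2) (mLeft m1 m2)).S
      exact iff_of_false (glue_S_inr (mRight m1 m2) c) (glue_S_inr (mLeft m1 m2) _)
  · -- T
    rintro ((a | b) | c)
    · show _ ↔ Sum.inl a ∈ (glue U (glue V W m2) (mLeft m1 m2)).T
      erw [glue_T_inl (mRight m1 m2), glue_T_inl (mLeft m1 m2)]
      constructor
      · rintro ⟨h, hw⟩
        obtain ⟨ha, hva⟩ := (glue_T_inl m1 a).mp h
        rw [mRight_g_inl m1 m2 h ha hva] at hw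
        refine ⟨ha, ?_⟩
        rw [mLeft_g]
        exact (glue_T_inl m2 _).mpr ⟨hva, hw⟩
      · rintro ⟨ha, h⟩
        rw [mLeft_g] at h
        obtain ⟨hva, hw⟩ := (glue_T_inl m2 _).mp h
        have hT := (glue_T_inl m1 a).mpr ⟨ha, hva⟩
        refine ⟨hT, ?_⟩
        rw [mRight_g_inl m1 m2 hT ha hva]
        exact hw
    · show _ ↔ Sum.inr _ ∈ (glue U (glue V W m2) (mLeft m1 m2)).T
      erw [glue_T_inl (mRight m1 m2), glue_T_inr (mLeft m1 m2), glue_T_inl m2]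
      constructor
      · rintro ⟨h, hw⟩
        have hb := (glue_T_inr m1 b).mp h
        rw [mRight_g_inr m1 m2 h hb] at hw
        exact ⟨hb, hw⟩
      · rintro ⟨hb, hw⟩
        have hT := (glue_T_inr m1 b).mpr hb
        refine ⟨hT, ?_⟩
        rw [mRight_g_inr m1 m2 hT hb]
        exact hw
    · show _ ↔ Sum.inr _ ∈ (glue U (glue V W m2) (mLeft m1 m2)).T
      erw [glue_T_inr (mRight m1 m2), glue_T_inr (mLeft m1 m2), glue_T_inr m2]
  · -- lab
    rintro ((a | b) | c) <;> rfl

end PreIpomset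

end HDA
namespace HDA

open PreIpomset PAutomaton

variable {σ : Type}

namespace PreIpomset

lemma glueRel_assoc_fwd {U V X W R : PreIpomset σ}
    (h1 : GlueRel U V X) (h2 : GlueRel X W R) :
    ∃ R', GlueRel V W R' ∧ GlueRel U R' R := by
  obtain ⟨m1, i1⟩ := h1
  obtain ⟨mR, iR⟩ :=
    glueRel_congr (isoSymm i1) (isoRefl W) (isoRefl R) h2
  refine ⟨glue V W (extractVW m1 mR), ⟨extractVW m1 mR, isoRefl _⟩,
    ⟨mLeft m1 (extractVW m1 mR), ?_⟩⟩
  have hiso := glue_assoc_iso m1 (extractVW m1 mR)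
  rw [mRight_extract m1 mR] at hiso
  exact isoTrans (isoSymm hiso) iR

lemma glueRel_assoc_bwd {U V W Y R : PreIpomset σ}
    (h1 : GlueRel V W Y) (h2 : GlueRel U Y R) :
    ∃ X, GlueRel U V X ∧ GlueRel X W R := by
  obtain ⟨m2, i2⟩ := h1
  obtain ⟨mL, iL⟩ :=
    glueRel_congr (isoRefl U) (isoSymm i2) (isoRefl R) h2
  refine ⟨glue U V (extractUV m2 mL), ⟨extractUV m2 mL, isoRefl _⟩,
    ⟨mRight (extractUV m2 mL) m2, ?_⟩⟩
  have hiso := glue_assoc_iso (extractUV m2 mL) m2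
  rw [mLeft_extract m2 mL] at hiso
  exact isoTrans hiso iL

end PreIpomset

namespace PAutomaton

open PreIpomset

variable {A : PAutomaton σ}

lemma rec_good (hA : A.IsPA) {p r : A.Q} {α : A.Path p r} {P : PreIpomset σ}
    (h : Rec α P) : Good P := by
  induction h with
  | nil q R hIso => exact good_iso hIso (good_idOf (hA.2.2.1 q).2.1)
  | cons e rest hrec hglue ih =>
    obtain ⟨m, hIso⟩ := hglue
    exact good_iso hIso (glue_good m (hA.2.2.2.1 e).good ih)

lemma rec_tgtIface (hA : A.IsPA) {p r : A.Q} {α : A.Path p r} {P : PreIpomset σ}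
    (h : Rec α P) : Iso P.tgtIface (A.mu r) := by
  induction h with
  | nil q R hIso =>
    exact isoTrans (iso_tgtIface (isoSymm hIso))
      (idOf_tgtIface (hA.2.2.1 q).2.2.1 (hA.2.2.1 q).2.2.2)
  | cons e rest hrec hglue ih =>
    obtain ⟨m, hIso⟩ := hglue
    exact isoTrans (iso_tgtIface (isoSymm hIso))
      (isoTrans (glue_tgtIface m (hA.2.2.2.1 e).good (rec_good hA hrec)) ih)

lemma rec_srcIface (hA : A.IsPA) {p r : A.Q} {α : A.Path p r} {P : PreIpomset σ}
    (h : Rec α P) : Iso P.srcIface (A.mu p) := by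
  induction h with
  | nil q R hIso =>
    exact isoTrans (iso_srcIface (isoSymm hIso))
      (idOf_srcIface (hA.2.2.1 q).2.2.1 (hA.2.2.1 q).2.2.2)
  | cons e rest hrec hglue ih =>
    obtain ⟨m, hIso⟩ := hglue
    exact isoTrans (iso_srcIface (isoSymm hIso))
      (isoTrans (glue_srcIface m (hA.2.2.2.1 e).good (rec_good hA hrec))
        (hA.2.2.2.2.1 e))

end PAutomaton

end HDA
namespace HDA

open PreIpomset PAutomaton

variable {σ : Type}

namespace PAutomaton

open PreIpomset

variable {A B : PAutomaton σ}

lemma isIpomset_idOf {U : PreIpomset σ} (h : U.IsConclist) : U.idOf.IsIpomset := by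
  obtain ⟨hi, hd, -, -⟩ := h
  exact ⟨hi.lt_trans, hi.lt_irrefl, hi.evord_acyclic, hi.total, hi.lt_not_evord,
    fun x _ y hy => hd y x hy, fun x _ y hy => hd x y hy, hi.interval⟩

def liftB (A B : PAutomaton σ) :
    ∀ {q r : B.Q}, B.Path q r → (A.concatAut B).Path (Sum.inr q) (Sum.inr r)
  | _, _, .nil q => @Path.nil σ (A.concatAut B) (Sum.inr q)
  | _, _, .cons f rest =>
      @Path.cons σ (A.concatAut B) (Sum.inr (Sum.inl f)) _ (liftB A B rest)

lemma rec_liftB {q r : B.Q} {β : B.Path q r} {Q : PreIpomset σ}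
    (h : Rec β Q) : Rec (liftB A B β) Q := by
  induction h with
  | nil q R hIso =>
    simp only [liftB]
    exact Rec.nil _ _ hIso
  | cons f rest hrec hglue ih =>
    simp only [liftB]
    exact @Rec.cons σ (A.concatAut B) (Sum.inr (Sum.inl f)) _ (liftB A B rest) _ _ ih hglue

lemma build (hA : A.IsPA) {p r : A.Q} {α : A.Path p r} {P : PreIpomset σ}
    (hP : Rec α P) :
    ∀ {Q R : PreIpomset σ}, GlueRel P Q R →
    ∀ {q0 rB : B.Q} {β : B.Path q0 rB}, Rec β Q →
    r ∈ A.accept → q0 ∈ B.start → Iso (A.mu r) (B.mu q0) →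
    ∃ γ : (A.concatAut B).Path (Sum.inl p) (Sum.inr rB), Rec γ R := by
  induction hP with
  | nil q P0 hIso =>
    intro Q R hQR q0 rB β hβ hr hq0 hiso
    refine ⟨@Path.cons σ (A.concatAut B) (Sum.inr (Sum.inr ⟨(q, q0), hr, hq0, hiso⟩))
      _ (liftB A B β), ?_⟩
    exact Rec.cons _ _ (rec_liftB hβ)
      (glueRel_congr (isoSymm hIso) (isoRefl Q) (isoRefl R) hQR)
  | cons e rest hrec hglue ih =>
    intro Q R hQR q0 rB β hβ hr hq0 hiso
    obtain ⟨R', hVW, hUR⟩ := glueRel_assoc_fwd hglue hQR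
    obtain ⟨γ', hγ'⟩ := ih hVW hβ hr hq0 hiso
    exact ⟨@Path.cons σ (A.concatAut B) (Sum.inl e) _ γ', Rec.cons _ _ hγ' hUR⟩

lemma decomp {c z : (A.concatAut B).Q} {γ : (A.concatAut B).Path c z}
    {R : PreIpomset σ} (h : Rec γ R) :
    ∀ rB : B.Q, z = Sum.inr rB →
      (∀ q, c = Sum.inr q → ∃ β : B.Path q rB, Rec β R) ∧
      (∀ p, c = Sum.inl p → ∃ (P Q : PreIpomset σ) (r : A.Q) (q0 : B.Q)
        (α : A.Path p r) (β : B.Path q0 rB),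
        Rec α P ∧ Rec β Q ∧ GlueRel P Q R ∧ r ∈ A.accept ∧ q0 ∈ B.start) := by
  induction h with
  | nil x R hIso =>
    rintro rB rfl
    constructor
    · rintro q hq
      obtain rfl : rB = q := Sum.inr.inj hq
      exact ⟨Path.nil rB, Rec.nil _ _ hIso⟩
    · rintro p hp
      exact absurd hp (by simp)
  | cons e rest hrec hglue ih =>
    rintro rB rfl
    rcases e with a | f | br
    · constructor
      · rintro q hq
        exact absurd hq (by simp [concatAut])
      · rintro p hp
        obtain rfl : A.src a = p := Sum.inl.inj hp
        obtain ⟨P', Q, r, q0, α', β, hα', hβ, hPQ, hr, hq0⟩ :=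
          (ih rB rfl).2 (A.tgt a) rfl
        obtain ⟨X, hUVX, hXQR⟩ := glueRel_assoc_bwd hPQ hglue
        exact ⟨X, Q, r, q0, Path.cons a α', β,
          Rec.cons a α' hα' hUVX, hβ, hXQR, hr, hq0⟩
    · constructor
      · rintro q hq
        obtain rfl : B.src f = q := Sum.inr.inj hq
        obtain ⟨β', hβ'⟩ := (ih rB rfl).1 (B.tgt f) rfl
        exact ⟨Path.cons f β', Rec.cons f β' hβ' hglue⟩
      · rintro p hp
        exact absurd hp (by simp [concatAut])
    · constructor
      · rintro q hq
        exact absurd hq (by simp [concatAut])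
      · rintro p hp
        obtain rfl : br.val.1 = p := Sum.inl.inj hp
        obtain ⟨β, hβ⟩ := (ih rB rfl).1 br.val.2 rfl
        exact ⟨(A.mu br.val.1).idOf, _, br.val.1, br.val.2, Path.nil _, β,
          Rec.nil _ _ (isoRefl _), hβ, hglue, br.2.1, br.2.2.1⟩
end PAutomaton

end HDA

namespace HDA

open PreIpomset PAutomaton


/-- For reduced gST-automata `𝒜`, `ℬ`, the concatenation `𝒜*ℬ` is a
gST-automaton with `L(𝒜*ℬ) = L(𝒜)·L(ℬ)`. -/
theorem concat_lang {σ : Type} [Finite σ] (A B : PAutomaton σ)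
    (hA : A.IsPA) (hgA : A.IsGST) (hrA : A.Reduced)
    (hB : B.IsPA) (hgB : B.IsGST) (hrB : B.Reduced) :
    (A.concatAut B).IsPA ∧ (A.concatAut B).IsGST ∧
    (A.concatAut B).lang = glueLang A.lang B.lang := by
  have hconc : ∀ q : (A.concatAut B).Q, ((A.concatAut B).mu q).IsConclist := by
    rintro (q | q)
    · exact hA.2.2.1 q
    · exact hB.2.2.1 q
  refine ⟨⟨?_, ?_, hconc, ?_, ?_, ?_⟩, ?_, ?_⟩
  · -- Finite Q
    have := hA.1; have := hB.1
    exact Finite.instSum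
  · -- Finite E
    have := hA.1; have := hB.1
    have := hA.2.1; have := hB.2.1
    have : Finite {pq : A.Q × B.Q //
        pq.1 ∈ A.accept ∧ pq.2 ∈ B.start ∧ Iso (A.mu pq.1) (B.mu pq.2)} :=
      Subtype.finite
    exact Finite.instSum
  · -- labels are ipomsets
    rintro (a | f | br)
    · exact hA.2.2.2.1 a
    · exact hB.2.2.2.1 f
    · exact isIpomset_idOf (hA.2.2.1 br.val.1)
  · -- source interfaces
    rintro (a | f | br)
    · exact hA.2.2.2.2.1 a
    · exact hB.2.2.2.2.1 f
    · exact idOf_srcIface (hA.2.2.1 br.val.1).2.2.1 (hA.2.2.1 br.val.1).2.2.2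
  · -- target interfaces
    rintro (a | f | br)
    · exact hA.2.2.2.2.2 a
    · exact hB.2.2.2.2.2 f
    · exact isoTrans
        (idOf_tgtIface (hA.2.2.1 br.val.1).2.2.1 (hA.2.2.1 br.val.1).2.2.2)
        br.2.2.2
  · -- gST
    rintro (a | f | br)
    · exact hgA a
    · exact hgB f
    · exact (hA.2.2.1 br.val.1).2.1
  · -- language
    ext R
    constructor
    · rintro ⟨p', r', γ, hp', hr', hrec⟩
      obtain ⟨p0, hp0, rfl⟩ := hp'
      obtain ⟨rB, hrB, rfl⟩ := hr'
      obtain ⟨P, Q, r, q0, α, β, hα, hβ, hPQ, hr, hq0⟩ :=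
        (decomp hrec rB rfl).2 p0 rfl
      exact ⟨P, ⟨p0, r, α, hp0, hr, hα⟩, Q, ⟨q0, rB, β, hq0, hrB, hβ⟩, hPQ⟩
    · rintro ⟨P, ⟨p0, r, α, hp0, hr, hα⟩, Q, ⟨q0, rB, β, hq0, hrB, hβ⟩, hPQ⟩
      obtain ⟨m, -⟩ := id hPQ
      have hiso : Iso (A.mu r) (B.mu q0) :=
        isoTrans (isoSymm (rec_tgtIface hA hα))
          (isoTrans (matching_iface m (rec_good hA hα) (rec_good hB hβ))
            (rec_srcIface hB hβ))
      obtain ⟨γ, hγ⟩ := build hA hα hPQ hβ hr hq0 hiso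
      exact ⟨Sum.inl p0, Sum.inr rB, γ, ⟨p0, hp0, rfl⟩, ⟨rB, hrB, rfl⟩, hγ⟩


end HDA
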